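/- arXiv:0805.0954 — 8 statements merged into one kernel-verified Lean document; each statement's English description precedes it below -/
import Mathlib

section
/- Let a = (a_1,…,a_p) be a primitive p-tuple and let λ ∈ ℤ_+^p satisfy λ_i ≥ max(a_1,…,a_p) for every i = 1,…,p. Then λ is saturated for a, i.e., M(a,λ) = {0,1,…,λ·a} \ (G(a) ∪ (λ·a − G(a))). -/
open Finset

/-- The monoid generated by a tuple `a` of nonnegative integers:
all nonnegative integer combinations of its entries. -/
def tupleMonoid {ι : Type} [Fintype ι] (a : ι → ℕ) : Set ℕ :=
  {v | ∃ μ : ι → ℕ, v = ∑ i, μ i * a i}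

/-- The gap set `G(a) = ℤ₊ \ M(a)`. -/
def gapSet {ι : Type} [Fintype ι] (a : ι → ℕ) : Set ℕ :=
  {v | v ∉ tupleMonoid a}

/-- The restriction `M(a,λ) = {μ·a : μ ∈ ℤ₊^p, μ ≤ λ}`. -/
def restrictedMonoid {ι : Type} [Fintype ι] (a lam : ι → ℕ) : Set ℕ :=
  {v | ∃ μ : ι → ℕ, μ ≤ lam ∧ v = ∑ i, μ i * a i}

lemma ceil_div_spec (X Y : ℕ) (hY : 0 < Y) :
    X ≤ ((X + Y - 1) / Y) * Y ∧ ((X + Y - 1) / Y) * Y ≤ X + Y - 1 := by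
  constructor
  · by_contra h
    push_neg at h
    have h3 : ((X + Y - 1) / Y + 1) * Y ≤ X + Y - 1 := by
      rw [add_mul, one_mul]; omega
    have h4 : (X + Y - 1) / Y + 1 ≤ (X + Y - 1) / Y :=
      (Nat.le_div_iff_mul_le hY).mpr h3
    omega
  · exact Nat.div_mul_le_self _ _




/-- Given `g = gcd ax D' ∣ R`, there is `ρ < D'/g` with `ρ * ax ≡ R (mod D')`. -/
lemma exists_residue (D' ax R : ℕ) (hD' : 0 < D') (hax : 0 < ax)
    (h : Nat.gcd ax D' ∣ R) :
    ∃ ρ : ℕ, ρ < D' / Nat.gcd ax D' ∧ (D' : ℤ) ∣ (R : ℤ) - ρ * ax := by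
  set g := Nat.gcd ax D' with hg
  have hgpos : 0 < g := Nat.gcd_pos_of_pos_left _ hax
  have hgD : g ∣ D' := Nat.gcd_dvd_right _ _
  have hgax : g ∣ ax := Nat.gcd_dvd_left _ _
  set r := D' / g with hr
  have hrpos : 0 < r := Nat.div_pos (Nat.le_of_dvd hD' hgD) hgpos
  have hbez : (g : ℤ) = ax * Nat.gcdA ax D' + D' * Nat.gcdB ax D' := Nat.gcd_eq_gcd_ab ax D'
  obtain ⟨k, hk⟩ := h
  set w : ℤ := Nat.gcdA ax D' * k with hw
  have hdvd1 : (D' : ℤ) ∣ (R : ℤ) - w * ax := by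
    refine ⟨(Nat.gcdB ax D' * k), ?_⟩
    have : (R : ℤ) = g * k := by exact_mod_cast hk
    rw [this, hbez]; ring
  set ρz : ℤ := w % (r : ℤ) with hρz
  have hrz : (0:ℤ) < (r:ℤ) := by exact_mod_cast hrpos
  have hρnn : 0 ≤ ρz := Int.emod_nonneg w (by omega)
  have hρlt : ρz < (r:ℤ) := Int.emod_lt_of_pos w hrz
  have hrax : (r : ℤ) * ax = (D' : ℤ) * ((ax / g : ℕ) : ℤ) := by
    have h1 : r * ax = D' * (ax / g) := by
      have e1 : g * r = D' := Nat.mul_div_cancel' hgD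
      have e2 : g * (ax / g) = ax := Nat.mul_div_cancel' hgax
      calc r * ax = r * (g * (ax / g)) := by rw [e2]
        _ = (g * r) * (ax / g) := by ring
        _ = D' * (ax / g) := by rw [e1]
    exact_mod_cast h1
  have hdvd2 : (D' : ℤ) ∣ (w - ρz) * ax := by
    have : (r : ℤ) ∣ (w - ρz) := by
      refine ⟨w / (r:ℤ), ?_⟩
      rw [hρz, Int.emod_def]; ring
    obtain ⟨c, hc⟩ := this
    refine ⟨c * ((ax / g : ℕ) : ℤ), ?_⟩
    rw [hc]
    calc (r:ℤ) * c * ax = ((r:ℤ) * ax) * c := by ring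
      _ = (D' : ℤ) * ((ax / g : ℕ) : ℤ) * c := by rw [hrax]
      _ = (D':ℤ) * (c * ((ax / g : ℕ) : ℤ)) := by ring
  refine ⟨ρz.toNat, ?_, ?_⟩
  · have : (ρz.toNat : ℤ) < (r:ℤ) := by rwa [Int.toNat_of_nonneg hρnn]
    exact_mod_cast this
  · have hcast : ((ρz.toNat : ℕ) : ℤ) = ρz := Int.toNat_of_nonneg hρnn
    rw [hcast]
    have : (R : ℤ) - ρz * ax = ((R : ℤ) - w * ax) + (w - ρz) * ax := by ring
    rw [this]
    exact dvd_add hdvd1 hdvd2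

open Finset


/-- Every representation can be reduced so that all coefficients outside `i₀`
(the max index) are `< a i₀`. -/
lemma reduce_aux {p : ℕ} (a : Fin p → ℕ) (i₀ : Fin p)
    (hpos : 0 < a i₀) :
    ∀ (N : ℕ) (c : Fin p → ℕ), (∑ i ∈ univ.erase i₀, c i) ≤ N →
    ∃ c' : Fin p → ℕ, (∀ i, i ≠ i₀ → c' i < a i₀) ∧ ∑ i, c' i * a i = ∑ i, c i * a i := by
  intro N
  induction N with
  | zero =>
    intro c hc
    refine ⟨c, fun i hi => ?_, rfl⟩
    have : c i = 0 := by
      have hmem : i ∈ univ.erase i₀ := Finset.mem_erase.mpr ⟨hi, mem_univ i⟩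
      have := Finset.sum_eq_zero_iff.mp (Nat.le_zero.mp hc) i hmem
      exact this
    omega
  | succ N ih =>
    intro c hc
    by_cases hall : ∀ i, i ≠ i₀ → c i < a i₀
    · exact ⟨c, hall, rfl⟩
    · push_neg at hall
      obtain ⟨j, hj, hcj⟩ := hall
      -- exchange: remove a i₀ copies of a j weight from j, add a j copies to i₀
      set c1 : Fin p → ℕ := Function.update c j (c j - a i₀) with hc1
      set c2 : Fin p → ℕ := Function.update c1 i₀ (c1 i₀ + a j) with hc2
      have hc1j : c1 j = c j - a i₀ := by rw [hc1]; simp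
      have hc1i₀ : c1 i₀ = c i₀ := by rw [hc1]; exact Function.update_of_ne (Ne.symm hj) _ c
      have hc1other : ∀ i, i ≠ j → c1 i = c i := fun i hi => Function.update_of_ne hi _ c
      have hc2i₀ : c2 i₀ = c1 i₀ + a j := by rw [hc2]; simp
      have hc2other : ∀ i, i ≠ i₀ → c2 i = c1 i := fun i hi => Function.update_of_ne hi _ c1
      -- sum over erase decreased by a i₀
      have hsum_erase : ∑ i ∈ univ.erase i₀, c2 i + a i₀ = ∑ i ∈ univ.erase i₀, c i := by
        have h1 : ∑ i ∈ univ.erase i₀, c2 i = ∑ i ∈ univ.erase i₀, c1 i :=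
          Finset.sum_congr rfl (fun i hi => hc2other i (Finset.mem_erase.mp hi).1)
        rw [h1]
        have hjmem : j ∈ univ.erase i₀ := Finset.mem_erase.mpr ⟨hj, mem_univ j⟩
        have h2 : ∑ i ∈ (univ.erase i₀).erase j, c1 i = ∑ i ∈ (univ.erase i₀).erase j, c i :=
          Finset.sum_congr rfl (fun i hi => hc1other i (Finset.mem_erase.mp hi).1)
        have e1 := Finset.sum_erase_add (univ.erase i₀) c1 hjmem
        have e2 := Finset.sum_erase_add (univ.erase i₀) c hjmem
        omega
      have hmeasure : ∑ i ∈ univ.erase i₀, c2 i ≤ N := by omega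
      -- values preserved
      have hval : ∑ i, c2 i * a i = ∑ i, c i * a i := by
        have hi₀mem : i₀ ∈ (univ : Finset (Fin p)) := mem_univ i₀
        have hjmem : j ∈ univ.erase i₀ := Finset.mem_erase.mpr ⟨hj, mem_univ j⟩
        have e2 := Finset.sum_erase_add univ (fun i => c2 i * a i) hi₀mem
        have e2' := Finset.sum_erase_add univ (fun i => c i * a i) hi₀mem
        have e3 := Finset.sum_erase_add (univ.erase i₀) (fun i => c2 i * a i) hjmem
        have e3' := Finset.sum_erase_add (univ.erase i₀) (fun i => c i * a i) hjmem
        have hcong : ∑ i ∈ (univ.erase i₀).erase j, c2 i * a i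
            = ∑ i ∈ (univ.erase i₀).erase j, c i * a i := by
          refine Finset.sum_congr rfl (fun i hi => ?_)
          have h1 := (Finset.mem_erase.mp hi).1
          have h2 := (Finset.mem_erase.mp (Finset.mem_erase.mp hi).2).1
          rw [hc2other i h2, hc1other i h1]
        have hc2j : c2 j = c j - a i₀ := by rw [hc2other j hj, hc1j]
        have hkey : c2 j * a j + c2 i₀ * a i₀ = c j * a j + c i₀ * a i₀ := by
          rw [hc2j, hc2i₀, hc1i₀]
          have : (c j - a i₀) * a j = c j * a j - a i₀ * a j := by
            rw [Nat.sub_mul]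
          rw [this, Nat.add_mul]
          have hle : a i₀ * a j ≤ c j * a j := Nat.mul_le_mul_right _ hcj
          have : a j * a i₀ = a i₀ * a j := Nat.mul_comm _ _
          omega
        omega
      obtain ⟨c', h1, h2⟩ := ih c2 hmeasure
      exact ⟨c', h1, by rw [h2, hval]⟩

lemma core_lemma {p : ℕ} (a lam : Fin p → ℕ) (i₀ : Fin p)
    (ha_pos : ∀ i, 0 < a i) (ha_inj : Function.Injective a)
    (hmax : ∀ i, a i ≤ a i₀) (hlam : ∀ i, a i₀ ≤ lam i)
    (s : Finset (Fin p)) :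
    i₀ ∉ s → ∀ R : ℕ,
    ((insert i₀ s).gcd a) ∣ R →
    (s.sup a) * (a i₀ / ((insert i₀ s).gcd a) - 1) ≤ R →
    R + (s.sup a) * (a i₀ / ((insert i₀ s).gcd a) - 1) ≤ lam i₀ * a i₀ + ∑ i ∈ s, lam i * a i →
    ∃ μ : Fin p → ℕ, (∀ i, μ i ≤ lam i) ∧ (∀ i, i ∉ insert i₀ s → μ i = 0) ∧ ∑ i, μ i * a i = R := by
  induction s using Finset.strongInduction with
  | _ s ih =>
  intro hi₀ R hdvd hlow hhigh
  have hm : 0 < a i₀ := ha_pos i₀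
  rcases s.eq_empty_or_nonempty with hs | hs
  · -- base case : s = ∅
    subst hs
    have hgcd1 : (insert i₀ (∅ : Finset (Fin p))).gcd a = a i₀ := by
      simp [Finset.gcd_insert, Finset.gcd_empty]
    rw [hgcd1] at hdvd
    rw [hgcd1] at hhigh
    simp only [Finset.sup_empty, Finset.sum_empty, add_zero, Nat.bot_eq_zero,
      Nat.zero_mul, Nat.add_zero] at hhigh hlow ⊢
    have hRle : R ≤ lam i₀ * a i₀ := hhigh
    refine ⟨fun i => if i = i₀ then R / a i₀ else 0, ?_, ?_, ?_⟩
    · intro i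
      by_cases h : i = i₀
      · have h1 : R / a i₀ * a i₀ = R := Nat.div_mul_cancel hdvd
        have h2 : R / a i₀ * a i₀ ≤ lam i₀ * a i₀ := by omega
        have h3 : R / a i₀ ≤ lam i₀ := Nat.le_of_mul_le_mul_right h2 hm
        simp only [h, if_pos rfl]
        exact h3
      · simp [h]
    · intro i hi
      have : i ≠ i₀ := by
        intro h; exact hi (h ▸ Finset.mem_insert_self i₀ ∅)
      simp [this]
    · rw [Finset.sum_eq_single i₀]
      · simp [Nat.div_mul_cancel hdvd]
      · intro b _ hb; simp [hb]
      · intro h; exact absurd (Finset.mem_univ i₀) h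
  · -- inductive step
    obtain ⟨x, hx⟩ := hs
    have hxne : x ≠ i₀ := fun h => hi₀ (h ▸ hx)
    set s' := s.erase x with hs'def
    have hi₀s' : i₀ ∉ s' := fun h => hi₀ (Finset.mem_of_mem_erase h)
    have hins : insert i₀ s = insert x (insert i₀ s') := by
      conv_lhs => rw [← Finset.insert_erase hx]
      exact Finset.insert_comm i₀ x s'
    set D' := (insert i₀ s').gcd a with hD'def
    set D := (insert i₀ s).gcd a with hDdef
    have hD_eq : D = Nat.gcd (a x) D' := by
      rw [hDdef, hins, Finset.gcd_insert]; rfl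
    have hD'm : D' ∣ a i₀ := Finset.gcd_dvd (Finset.mem_insert_self _ _)
    have hD'pos : 0 < D' := Nat.pos_of_dvd_of_pos hD'm hm
    have hDax : D ∣ a x := hD_eq ▸ Nat.gcd_dvd_left _ _
    have hDD' : D ∣ D' := hD_eq ▸ Nat.gcd_dvd_right _ _
    have hDpos : 0 < D := Nat.pos_of_dvd_of_pos hDD' hD'pos
    set r := D' / D with hrdef
    have hrD : D * r = D' := Nat.mul_div_cancel' hDD'
    have hrpos : 0 < r := by
      rcases Nat.eq_zero_or_pos r with h | h
      · rw [h, Nat.mul_zero] at hrD; omega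
      · exact h
    set q' := a i₀ / D' with hq'def
    have hq'd : D' * q' = a i₀ := Nat.mul_div_cancel' hD'm
    have hq'pos : 0 < q' := by
      rcases Nat.eq_zero_or_pos q' with h | h
      · rw [h, Nat.mul_zero] at hq'd; omega
      · exact h
    have hmD : a i₀ / D = r * q' := by
      have : a i₀ = D * (r * q') := by rw [← hq'd, ← hrD]; ring
      rw [this, Nat.mul_div_cancel_left _ hDpos]
    set t' := s'.sup a with ht'def
    set t := s.sup a with htdef
    have ht : t = max (a x) t' := by
      have h1 : insert x s' = s := Finset.insert_erase hx
      rw [htdef, ← h1, Finset.sup_insert]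
    have hax_le_t : a x ≤ t := by rw [ht]; exact le_max_left _ _
    have ht'_le_t : t' ≤ t := by rw [ht]; exact le_max_right _ _
    have haxm : a x < a i₀ := by
      have h1 : a x ≤ a i₀ := hmax x
      have h2 : a x ≠ a i₀ := fun h => hxne (ha_inj h)
      omega
    have haxpos : 0 < a x := ha_pos x
    have hrD' : r ≤ D' := Nat.le_of_dvd hD'pos ⟨D, by rw [← hrD]; ring⟩
    have hD'le : D' ≤ a i₀ := Nat.le_of_dvd hm hD'm
    -- key abbreviations
    set β' := t' * (q' - 1) with hβ'def
    set t3 := t * (r * q' - 1) with ht3def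
    set C' := lam i₀ * a i₀ + ∑ i ∈ s', lam i * a i with hC'def
    -- rewrite the invariants
    rw [hmD] at hlow hhigh
    have hC : lam i₀ * a i₀ + ∑ i ∈ s, lam i * a i = C' + lam x * a x := by
      rw [hC'def]
      have h5 := Finset.sum_erase_add s (fun i => lam i * a i) hx
      rw [← hs'def] at h5
      omega
    rw [hC] at hhigh
    -- F3 : β' + (r-1) * a x ≤ t3
    have hF3 : β' + (r - 1) * a x ≤ t3 := by
      obtain ⟨r1, hr1⟩ := Nat.exists_eq_add_of_le hrpos
      obtain ⟨q1, hq1⟩ := Nat.exists_eq_add_of_le hq'pos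
      have e1 : r * q' - 1 = r1 * q1 + r1 + q1 := by
        have : r * q' = 1 + (r1 * q1 + r1 + q1) := by rw [hr1, hq1]; ring
        omega
      have e2 : β' = t' * q1 := by rw [hβ'def, hq1]; congr 1; omega
      have e3 : (r - 1) * a x = r1 * a x := by rw [hr1]; congr 1; omega
      rw [ht3def, e1, e2, e3]
      have h1 : t' * q1 ≤ t * q1 := Nat.mul_le_mul_right _ ht'_le_t
      have h2 : r1 * a x ≤ r1 * t := Nat.mul_le_mul_left _ hax_le_t
      have h3 : t * (r1 * q1 + r1 + q1) = t * (r1*q1) + r1 * t + t * q1 := by ring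
      omega
    -- F4 : 2 * β' + r * a x ≤ C'
    have hF4 : 2 * β' + r * a x ≤ C' := by
      have hlamm : a i₀ * a i₀ ≤ lam i₀ * a i₀ := Nat.mul_le_mul_right _ (hlam i₀)
      rcases s'.eq_empty_or_nonempty with h'' | h''
      · have ht'0 : t' = 0 := by rw [ht'def, h'']; rfl
        have hβ'0 : β' = 0 := by rw [hβ'def, ht'0]; ring
        have h1 : r * a x ≤ a i₀ * a x := Nat.mul_le_mul_right _ (le_trans hrD' hD'le)
        have h2 : a i₀ * a x ≤ a i₀ * a i₀ := Nat.mul_le_mul_left _ (le_of_lt haxm)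
        have h3 : lam i₀ * a i₀ ≤ C' := by rw [hC'def]; omega
        omega
      · obtain ⟨i₁, hi₁mem, hti⟩ := Finset.exists_mem_eq_sup s' h'' a
        have hti' : t' = a i₁ := by rw [ht'def]; exact hti
        have hi₁ne : i₁ ≠ i₀ := fun h => hi₀s' (h ▸ hi₁mem)
        have hD't' : D' ≤ t' := by
          have hdvd1 : D' ∣ a i₁ := Finset.gcd_dvd (Finset.mem_insert_of_mem hi₁mem)
          have := Nat.le_of_dvd (ha_pos i₁) hdvd1
          omega
        have ht'm : t' < a i₀ := by
          have h1 : a i₁ ≤ a i₀ := hmax i₁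
          have h2 : a i₁ ≠ a i₀ := fun h => hi₁ne (ha_inj h)
          omega
        have hC'1 : a i₀ * a i₀ + a i₀ * t' ≤ C' := by
          have h1 : lam i₁ * a i₁ ≤ ∑ i ∈ s', lam i * a i := by
            apply Finset.single_le_sum (fun i _ => Nat.zero_le _) hi₁mem
          have h2 : a i₀ * t' ≤ lam i₁ * a i₁ := by
            rw [hti']
            exact Nat.mul_le_mul_right _ (hlam i₁)
          rw [hC'def]; omega
        rcases Nat.lt_or_ge D' 2 with hD'1 | hD'2
        · -- D' = 1
          have hD'eq : D' = 1 := by omega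
          have hreq : r = 1 := by
            have : r ≤ 1 := hD'eq ▸ hrD'
            omega
          have hq'm : q' = a i₀ := by
            have := hq'd
            rw [hD'eq, one_mul] at this
            exact this
          -- goal : 2 * (t' * (q'-1)) + 1 * a x ≤ C'
          obtain ⟨m1, hm1⟩ := Nat.exists_eq_add_of_le hm
          have e1 : q' - 1 = m1 := by omega
          have hβ : β' = t' * m1 := by rw [hβ'def, e1]
          have hrx : r * a x = a x := by rw [hreq]; ring
          have ht'le : t' ≤ m1 := by omega
          have haxle : a x ≤ m1 := by omega
          have hexp : (1 + m1) * (1 + m1) + (1 + m1) * t' = 1 + 2*m1 + m1*m1 + t' + t'*m1 := by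
            ring
          have hmul : t' * m1 ≤ m1 * m1 := Nat.mul_le_mul_right m1 ht'le
          have hmul2 : t' * m1 = m1 * t' := Nat.mul_comm _ _
          have key : 2 * (t' * m1) + a x ≤ (1 + m1) * (1 + m1) + (1 + m1) * t' := by
            rw [hexp]; omega
          rw [hβ, hrx]
          have heq : a i₀ * a i₀ + a i₀ * t' = (1+m1)*(1+m1) + (1+m1)*t' := by rw [hm1]
          omega
        · -- D' ≥ 2
          have h2q : 2 * q' ≤ a i₀ := by
            calc 2 * q' ≤ D' * q' := Nat.mul_le_mul_right _ hD'2
            _ = a i₀ := hq'd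
          have hβ2 : 2 * β' ≤ t' * (a i₀ - 2) := by
            have e : 2 * (q' - 1) = 2 * q' - 2 := by omega
            have e2 : 2 * β' = t' * (2 * (q' - 1)) := by rw [hβ'def]; ring
            rw [e2, e]
            exact Nat.mul_le_mul_left _ (by omega)
          have hrx : r * a x ≤ t' * (a i₀ - 1) := by
            have h1 : r ≤ t' := le_trans hrD' hD't'
            have h2 : a x ≤ a i₀ - 1 := by omega
            exact Nat.mul_le_mul h1 h2
          have hm2 : 2 ≤ a i₀ := le_trans hD'2 hD'le
          obtain ⟨m2, hm2'⟩ := Nat.exists_eq_add_of_le hm2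
          have key : t' * (a i₀ - 2) + t' * (a i₀ - 1) ≤ a i₀ * a i₀ + a i₀ * t' := by
            have e1 : a i₀ - 2 = m2 := by omega
            have e2 : a i₀ - 1 = m2 + 1 := by omega
            rw [e1, e2, hm2']
            have ht'le : t' ≤ m2 + 1 := by omega
            have hexp : (2+m2)*(2+m2) + (2+m2)*t' = m2*m2 + 4*m2 + 4 + t'*m2 + 2*t' := by
              ring
            have hexp2 : t' * (m2+1) = t'*m2 + t' := by ring
            have hmul : t' * m2 ≤ (m2+1) * m2 := Nat.mul_le_mul_right m2 ht'le
            have hexp3 : (m2+1) * m2 = m2*m2 + m2 := by ring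
            omega
          omega
    -- residue
    have hgcdD : Nat.gcd (a x) D' ∣ R := hD_eq ▸ hdvd
    obtain ⟨ρ, hρr, hρdvd⟩ := exists_residue D' (a x) R hD'pos haxpos hgcdD
    rw [show D' / Nat.gcd (a x) D' = r by rw [← hD_eq]] at hρr
    have hρlam : ρ ≤ lam x := by
      have h1 : ρ < r := hρr
      have := hlam x
      omega
    -- the unified finishing move
    have main : ∀ c k R' : ℕ, c = ρ + r * k → c ≤ lam x → R' + c * a x = R →
        β' ≤ R' → R' + β' ≤ C' →
        ∃ μ : Fin p → ℕ, (∀ i, μ i ≤ lam i) ∧ (∀ i, i ∉ insert i₀ s → μ i = 0) ∧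
          ∑ i, μ i * a i = R := by
      intro c k R' hck hclam hR' hlow' hhigh'
      -- divisibility
      have hrax : r * a x = D' * (a x / D) := by
        have e2 : D * (a x / D) = a x := Nat.mul_div_cancel' hDax
        calc r * a x = r * (D * (a x / D)) := by rw [e2]
          _ = (D * r) * (a x / D) := by ring
          _ = D' * (a x / D) := by rw [hrD]
      have hdvdR' : D' ∣ R' := by
        have hZ : (D' : ℤ) ∣ (R : ℤ) - c * a x := by
          have e1 : (R : ℤ) - c * a x = ((R : ℤ) - ρ * a x) - k * ((r * a x : ℕ) : ℤ) := by
            rw [hck]; push_cast; ring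
          rw [e1]
          apply dvd_sub hρdvd
          have hdn : D' ∣ r * a x := ⟨a x / D, hrax⟩
          exact Dvd.dvd.mul_left (Int.natCast_dvd_natCast.mpr hdn) _
        have e2 : ((R' : ℕ) : ℤ) = (R : ℤ) - c * a x := by
          have : (R' : ℤ) + c * a x = R := by exact_mod_cast hR'
          omega
        rw [← e2] at hZ
        exact_mod_cast hZ
      have hss : s' ⊂ s := Finset.erase_ssubset hx
      have hgcds' : (insert i₀ s').gcd a = D' := rfl
      obtain ⟨μ', hμ'lam, hμ'supp, hμ'sum⟩ := ih s' hss hi₀s' R'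
        (by rw [hgcds']; exact hdvdR')
        (by rw [hgcds']
            have : a i₀ / D' = q' := rfl
            rw [this]
            exact hlow')
        (by rw [hgcds']
            have : a i₀ / D' = q' := rfl
            rw [this]
            exact hhigh')
      refine ⟨Function.update μ' x c, ?_, ?_, ?_⟩
      · intro i
        by_cases h : i = x
        · subst h; simp [hclam]
        · rw [Function.update_of_ne h]; exact hμ'lam i
      · intro i hi
        have hix : i ≠ x := by
          intro h
          apply hi
          rw [hins, h]
          exact Finset.mem_insert_self _ _
        rw [Function.update_of_ne hix]
        apply hμ'supp
        intro hmem
        apply hi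
        rw [hins]
        exact Finset.mem_insert_of_mem hmem
      · have hμ'x : μ' x = 0 := by
          apply hμ'supp
          intro hmem
          rcases Finset.mem_insert.mp hmem with h | h
          · exact hxne h
          · exact (Finset.notMem_erase x s) h
        have e1 := Finset.sum_erase_add univ (fun i => (Function.update μ' x c) i * a i)
          (Finset.mem_univ x)
        have e2 := Finset.sum_erase_add univ (fun i => μ' i * a i) (Finset.mem_univ x)
        have e3 : ∑ i ∈ univ.erase x, (Function.update μ' x c) i * a i
            = ∑ i ∈ univ.erase x, μ' i * a i := by
          apply Finset.sum_congr rfl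
          intro i hi
          rw [Function.update_of_ne (Finset.mem_erase.mp hi).1]
        have e4 : (Function.update μ' x c) x = c := by simp
        rw [e4] at e1
        rw [hμ'x] at e2
        omega
    -- now construct c by cases
    have hP2Y : (r - 1) * a x + a x = r * a x := by
      have : (r - 1) + 1 = r := by omega
      calc (r-1) * a x + a x = ((r-1) + 1) * a x := by ring
        _ = r * a x := by rw [this]
    by_cases hT : lam x * a x + β' ≤ R
    · -- top case
      set c := lam x - ((lam x - ρ) % r) with hcdef
      have hmodlt : (lam x - ρ) % r < r := Nat.mod_lt _ hrpos
      have hdm := Nat.div_add_mod (lam x - ρ) r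
      have hck : c = ρ + r * ((lam x - ρ) / r) := by omega
      have hclam : c ≤ lam x := Nat.sub_le _ _
      have hcge : lam x ≤ c + (r - 1) := by omega
      have h1 : c * a x ≤ lam x * a x := Nat.mul_le_mul_right _ hclam
      have h2 : lam x * a x ≤ c * a x + (r - 1) * a x := by
        calc lam x * a x ≤ (c + (r-1)) * a x := Nat.mul_le_mul_right _ hcge
          _ = c * a x + (r-1) * a x := by ring
      have hcR : c * a x ≤ R := by omega
      refine main c _ (R - c * a x) hck hclam (by omega) (by omega) ?_
      -- R - c * a x + β' ≤ C'
      -- hhigh : R + t3 ≤ C' + lam x * a x ; hF3 : β' + (r-1)*a x ≤ t3 ; h2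
      omega
    · push_neg at hT
      by_cases hB : R + β' ≤ C'
      · -- bottom case, fits
        have hcρ : ρ * a x ≤ (r - 1) * a x := Nat.mul_le_mul_right _ (by omega)
        have hcR : ρ * a x ≤ R := by omega
        refine main ρ 0 (R - ρ * a x) (by ring) hρlam (by omega) (by omega) (by omega)
      · push_neg at hB
        -- middle case
        obtain ⟨V, hV⟩ := Nat.exists_eq_add_of_le (le_of_lt hB)
        -- hV : R + β' = C' + V
        have hVpos : 0 < V := by omega
        set Y := r * a x with hYdef
        have hYpos : 0 < Y := Nat.mul_pos hrpos haxpos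
        -- choose c
        by_cases hρV : V ≤ ρ * a x
        · -- c = ρ works
          have hρY : ρ * a x < Y := by
            have : ρ * a x ≤ (r-1) * a x := Nat.mul_le_mul_right _ (by omega)
            omega
          have hcR : ρ * a x ≤ R := by omega
          refine main ρ 0 (R - ρ * a x) (by ring) hρlam (by omega) ?_ ?_
          · -- β' ≤ R - ρ * a x : use V ≤ ρ*ax < Y and hF4 : 2β' + Y ≤ C'
            omega
          · -- R - ρ*a x + β' ≤ C' : since ρ * a x ≥ V and R + β' = C' + V
            omega
        · push_neg at hρV
          set X := V - ρ * a x with hXdef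
          have hXpos : 0 < X := by omega
          set k := (X + Y - 1) / Y with hkdef
          obtain ⟨hk1, hk2⟩ := ceil_div_spec X Y hYpos
          rw [← hkdef] at hk1 hk2
          set c := ρ + r * k with hcdef
          have hXc : c * a x = ρ * a x + k * Y := by
            rw [hcdef, hYdef]; ring
          have hgeV : V ≤ c * a x := by
            -- X ≤ k * Y
            omega
          have hltV : c * a x < V + Y := by omega
          have hcR : c * a x ≤ R := by
            -- c*ax < V + Y ≤ R - β' since 2β' + Y ≤ C' and R + β' = C' + V
            omega
          have hclam : c ≤ lam x := by
            -- c * a x < lam x * a x + a x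
            have hkey : c * a x < lam x * a x + a x := by
              -- V + (r-1)*ax ≤ lam x * a x  from hhigh, hF3, hV
              omega
            have : c * a x < (lam x + 1) * a x := by
              have e : (lam x + 1) * a x = lam x * a x + a x := by ring
              omega
            by_contra hcon
            push_neg at hcon
            have : (lam x + 1) * a x ≤ c * a x := Nat.mul_le_mul_right _ hcon
            omega
          refine main c k (R - c * a x) rfl hclam (by omega) (by omega) (by omega)


/-- If `a` is a primitive `p`-tuple and `λ_i ≥ max(a)` for all `i`,
then `λ` is saturated for `a`:
`M(a,λ) = {0,1,…,λ·a} \ (G(a) ∪ (λ·a − G(a)))`. -/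
theorem saturated_of_ge_max {p : ℕ} (a : Fin p → ℕ)
    (ha_pos : ∀ i, 0 < a i) (ha_inj : Function.Injective a)
    (ha_gcd : Finset.univ.gcd a = 1)
    (lam : Fin p → ℕ) (hlam : ∀ i, Finset.univ.sup a ≤ lam i) :
    restrictedMonoid a lam =
      {v : ℕ | v ≤ ∑ i, lam i * a i} \
        (gapSet a ∪ {v : ℕ | ∃ g ∈ gapSet a, v + g = ∑ i, lam i * a i}) := by
  rcases Nat.eq_zero_or_pos p with hp | hp
  · subst hp
    rw [Finset.univ_eq_empty, Finset.gcd_empty] at ha_gcd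
    exact absurd ha_gcd (by norm_num)
  have hne : (univ : Finset (Fin p)).Nonempty := ⟨⟨0, hp⟩, mem_univ _⟩
  obtain ⟨i₀, -, hi₀sup⟩ := Finset.exists_mem_eq_sup univ hne a
  have hmax : ∀ i, a i ≤ a i₀ := fun i => hi₀sup ▸ Finset.le_sup (mem_univ i)
  have hlam' : ∀ i, a i₀ ≤ lam i := fun i => hi₀sup ▸ hlam i
  have hm : 0 < a i₀ := ha_pos i₀
  set S := ∑ i, lam i * a i with hSdef
  -- complement representation fact
  have hcompl : ∀ μ : Fin p → ℕ, (∀ i, μ i ≤ lam i) →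
      ∑ i, μ i * a i + ∑ i, (lam i - μ i) * a i = S := by
    intro μ hμ
    rw [hSdef, ← Finset.sum_add_distrib]
    apply Finset.sum_congr rfl
    intro i _
    have : μ i * a i + (lam i - μ i) * a i = (μ i + (lam i - μ i)) * a i := by ring
    rw [this, Nat.add_sub_cancel' (hμ i)]
  ext v
  constructor
  · rintro ⟨μ, hμle, rfl⟩
    have hμle' : ∀ i, μ i ≤ lam i := hμle
    have hsum := hcompl μ hμle'
    constructor
    · show ∑ i, μ i * a i ≤ S
      calc ∑ i, μ i * a i ≤ ∑ i, lam i * a i :=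
        Finset.sum_le_sum (fun i _ => Nat.mul_le_mul_right _ (hμle' i))
      _ = S := rfl
    · intro hbad
      rcases hbad with hbad | hbad
      · exact hbad ⟨μ, rfl⟩
      · obtain ⟨g, hg, hvg⟩ := hbad
        have hgv : g = ∑ i, (lam i - μ i) * a i := by omega
        exact hg ⟨fun i => lam i - μ i, hgv⟩
  · rintro ⟨hvS, hnot⟩
    have hvS' : v ≤ S := hvS
    have hvM : ∃ c : Fin p → ℕ, v = ∑ i, c i * a i := by
      by_contra h
      exact hnot (Or.inl h)
    have hSvM : ∃ c : Fin p → ℕ, S - v = ∑ i, c i * a i := by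
      by_contra h
      exact hnot (Or.inr ⟨S - v, h, by omega⟩)
    -- reduced representation machinery
    have reduced : ∀ w : ℕ, (∃ c : Fin p → ℕ, w = ∑ i, c i * a i) →
        w ≤ lam i₀ * a i₀ →
        ∃ c' : Fin p → ℕ, (∀ i, c' i ≤ lam i) ∧ w = ∑ i, c' i * a i := by
      intro w ⟨c, hc⟩ hwle
      obtain ⟨c', hlt, hsum⟩ := reduce_aux a i₀ hm (∑ i ∈ univ.erase i₀, c i) c le_rfl
      refine ⟨c', fun i => ?_, by omega⟩
      by_cases h : i = i₀
      · subst h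
        have h1 : c' i * a i ≤ ∑ j, c' j * a j :=
          Finset.single_le_sum (f := fun j => c' j * a j) (fun j _ => Nat.zero_le _)
            (mem_univ i)
        have h2 : c' i * a i ≤ lam i * a i := by omega
        exact Nat.le_of_mul_le_mul_right h2 hm
      · have := hlt i h
        have := hlam' i
        omega
    by_cases h1 : v ≤ lam i₀ * a i₀
    · obtain ⟨c', hc'le, hc'⟩ := reduced v hvM h1
      exact ⟨c', hc'le, hc'⟩
    · by_cases h2 : S - v ≤ lam i₀ * a i₀
      · obtain ⟨f, hfle, hf⟩ := reduced (S - v) hSvM h2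
        have hsum := hcompl f hfle
        have hveq : v = ∑ i, (lam i - f i) * a i := by omega
        exact ⟨fun i => lam i - f i, fun i => Nat.sub_le _ _, hveq⟩
      · -- middle range : use core_lemma
        push_neg at h1 h2
        have h3 : insert i₀ (univ.erase i₀) = univ := Finset.insert_erase (mem_univ i₀)
        have hgcd1 : (insert i₀ ((univ : Finset (Fin p)).erase i₀)).gcd a = 1 := by
          rw [h3]; exact ha_gcd
        have hS_eq : lam i₀ * a i₀ + ∑ i ∈ univ.erase i₀, lam i * a i = S := by
          have h4 := Finset.sum_erase_add univ (fun i => lam i * a i) (mem_univ i₀)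
          omega
        have htle : ((univ : Finset (Fin p)).erase i₀).sup a ≤ a i₀ - 1 := by
          apply Finset.sup_le
          intro i hi
          have hine : i ≠ i₀ := (Finset.mem_erase.mp hi).1
          have := hmax i
          have : a i ≠ a i₀ := fun h => hine (ha_inj h)
          omega
        have hβle : ((univ : Finset (Fin p)).erase i₀).sup a * (a i₀ / 1 - 1)
            ≤ (a i₀ - 1) * (a i₀ - 1) := by
          rw [Nat.div_one]
          exact Nat.mul_le_mul_right _ htle
        have hsq : (a i₀ - 1) * (a i₀ - 1) < lam i₀ * a i₀ := by
          obtain ⟨m1, hm1⟩ := Nat.exists_eq_add_of_le hm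
          have h5 : lam i₀ * a i₀ ≥ a i₀ * a i₀ := Nat.mul_le_mul_right _ (hlam' i₀)
          have h6 : a i₀ - 1 = m1 := by omega
          have h7 : a i₀ * a i₀ = (1 + m1) * (1 + m1) := by rw [hm1]
          have h8 : (1 + m1) * (1 + m1) = 1 + 2*m1 + m1*m1 := by ring
          rw [h6]
          omega
        obtain ⟨μ, hμle, hμsupp, hμsum⟩ := core_lemma a lam i₀ ha_pos ha_inj hmax hlam'
          (univ.erase i₀) (Finset.notMem_erase _ _) v
          (by rw [hgcd1]; exact one_dvd v)
          (by rw [hgcd1]; omega)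
          (by rw [hgcd1]; omega)
        exact ⟨μ, hμle, hμsum.symm⟩
end

section
/- For every primitive p-tuple a = (a_1,…,a_p), the quantity r(a) satisfies r(a) ≤ (2·max(a))^p, where max(a) := max(a_1,…,a_p). -/
/-- The Frobenius number `F(a) = max G(a)`, with `F(a) := 0` when `G(a) = ∅`
(by the `ℕ`-convention `sSup ∅ = 0`; also `sSup` of an unbounded set is `0`). -/
noncomputable def frob {ι : Type} [Fintype ι] (a : ι → ℕ) : ℕ :=
  sSup (gapSet a)

section aux
set_option linter.unusedSectionVars false
variable {ι : Type} [Fintype ι] [DecidableEq ι]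

lemma list_sum_mem_tupleMonoid (b : ι → ℕ) (l : List ι) :
    (l.map b).sum ∈ tupleMonoid b := by
  induction l with
  | nil => exact ⟨0, by simp⟩
  | cons i l ih =>
    obtain ⟨μ, hμ⟩ := ih
    refine ⟨fun j => μ j + if j = i then 1 else 0, ?_⟩
    simp only [List.map_cons, List.sum_cons, hμ, add_mul, Finset.sum_add_distrib, ite_mul,
      one_mul, zero_mul, Finset.sum_ite_eq' Finset.univ i b, Finset.mem_univ, if_true]
    ring

lemma tupleMonoid_exists_list (b : ι → ℕ) {v : ℕ} (h : v ∈ tupleMonoid b) :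
    ∃ l : List ι, (l.map b).sum = v := by
  obtain ⟨μ, rfl⟩ := h
  have key : ∀ s : Finset ι, ∃ l : List ι, (l.map b).sum = ∑ i ∈ s, μ i * b i := by
    intro s
    induction s using Finset.induction_on with
    | empty => exact ⟨[], by simp⟩
    | @insert a s ha ih =>
      obtain ⟨l, hl⟩ := ih
      refine ⟨List.replicate (μ a) a ++ l, ?_⟩
      simp [Finset.sum_insert ha, hl, List.sum_replicate, mul_comm]
  exact key Finset.univ

lemma finset_gcd_bezout (b : ι → ℕ) (s : Finset ι) :
    ∃ z : ι → ℤ, ((s.gcd b : ℕ) : ℤ) = ∑ i ∈ s, z i * b i := by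
  induction s using Finset.induction_on with
  | empty => exact ⟨0, by simp⟩
  | @insert a s ha ih =>
    obtain ⟨z, hz⟩ := ih
    refine ⟨fun i => if i = a then Nat.gcdA (b a) (s.gcd b)
      else Nat.gcdB (b a) (s.gcd b) * z i, ?_⟩
    rw [Finset.gcd_insert, Finset.sum_insert ha]
    have : GCDMonoid.gcd (b a) (s.gcd b) = Nat.gcd (b a) (s.gcd b) := rfl
    rw [this, Nat.gcd_eq_gcd_ab, hz]
    have hrw : ∀ i ∈ s, (if i = a then Nat.gcdA (b a) (s.gcd b)
        else Nat.gcdB (b a) (s.gcd b) * z i) * (b i : ℤ)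
        = Nat.gcdB (b a) (s.gcd b) * (z i * (b i : ℤ)) := by
      intro i hi
      rw [if_neg (by rintro rfl; exact ha hi)]; ring
    rw [Finset.sum_congr rfl hrw, ← Finset.mul_sum]
    simp only [if_pos rfl, if_true]
    ring

lemma exists_mem_mod_eq (b : ι → ℕ) (hg : ((Finset.univ.gcd b : ℕ) : ℤ) = 1) (q n : ℕ)
    (hq : 0 < q) :
    ∃ v ∈ tupleMonoid b, v % q = n % q := by
  obtain ⟨z, hz⟩ := finset_gcd_bezout b Finset.univ
  rw [hg] at hz
  refine ⟨∑ i, (((n : ℤ) * z i) % q).toNat * b i, ⟨_, rfl⟩, ?_⟩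
  refine (ZMod.natCast_eq_natCast_iff _ _ _).mp ?_
  have hsum : (∑ i, ((z i : ZMod q) * (b i : ZMod q))) = 1 := by
    have : ((1 : ℤ) : ZMod q) = ((∑ i, z i * b i : ℤ) : ZMod q) := by rw [← hz]
    push_cast at this
    rw [← this]
  have h1 : ∀ i : ι, ((((n : ℤ) * z i) % q).toNat : ZMod q) * ((b i : ℕ) : ZMod q)
      = (n : ZMod q) * ((z i : ZMod q) * ((b i : ℕ) : ZMod q)) := by
    intro i
    have h0 : (0:ℤ) ≤ ((n : ℤ) * z i) % q := Int.emod_nonneg _ (by exact_mod_cast hq.ne')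
    rw [← Int.cast_natCast (((n : ℤ) * z i) % q).toNat, Int.toNat_of_nonneg h0,
      ZMod.intCast_mod]
    push_cast
    ring
  push_cast
  rw [Finset.sum_congr rfl fun i _ => h1 i, ← Finset.mul_sum, hsum, mul_one]

lemma exists_short_list (b : ι → ℕ) (q : ℕ) (hq : 0 < q) (l : List ι) :
    ∃ l' : List ι, l'.length ≤ q ∧ ((l'.map b).sum) % q = ((l.map b).sum) % q := by
  by_cases hl : l.length ≤ q
  · exact ⟨l, hl, rfl⟩
  · push_neg at hl
    have key : ∀ i j : ℕ, i < j → j < q + 1 →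
        (((l.take i).map b).sum) % q = (((l.take j).map b).sum) % q →
        ∃ l' : List ι, l'.length ≤ q ∧ ((l'.map b).sum) % q = ((l.map b).sum) % q := by
      intro i j hlt hj heq
      have hlen : (l.take i ++ l.drop j).length < l.length := by
        rw [List.length_append, List.length_take, List.length_drop]
        omega
      have hres : (((l.take i ++ l.drop j).map b).sum) % q = ((l.map b).sum) % q := by
        conv_rhs => rw [← List.take_append_drop j l]
        rw [List.map_append, List.sum_append, List.map_append, List.sum_append]
        rw [Nat.add_mod, heq, ← Nat.add_mod]
      obtain ⟨l', h1, h2⟩ := exists_short_list b q hq (l.take i ++ l.drop j)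
      exact ⟨l', h1, h2.trans hres⟩
    obtain ⟨i, hi, j, hj, hij, heq⟩ :=
      Finset.exists_ne_map_eq_of_card_lt_of_maps_to
        (s := Finset.range (q+1)) (t := Finset.range q)
        (by simp) (f := fun k => (((l.take k).map b).sum) % q)
        (fun k _ => Finset.mem_range.mpr (Nat.mod_lt _ hq))
    simp only [Finset.mem_range] at hi hj
    rcases hij.lt_or_gt with hlt | hlt
    · exact key i j hlt hj heq
    · exact key j i hlt hi heq.symm
termination_by l.length
decreasing_by
  simp only [List.length_append, List.length_take, List.length_drop]
  omega

lemma ge_mem_tupleMonoid (b : ι → ℕ) (hg : Finset.univ.gcd b = 1) (hpos : ∀ i, 0 < b i)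
    (s : ℕ) (hs : ∀ i, b i ≤ s) (i₀ : ι) :
    ∀ n, s * s ≤ n → n ∈ tupleMonoid b := by
  intro n hn
  set q := b i₀ with hqdef
  have hq : 0 < q := hpos i₀
  have hqs : q ≤ s := hs i₀
  obtain ⟨v, hvM, hvmod⟩ := exists_mem_mod_eq b (by rw [hg]; norm_num) q n hq
  obtain ⟨l₀, hl₀⟩ := tupleMonoid_exists_list b hvM
  obtain ⟨l, hlen, hres⟩ := exists_short_list b q hq l₀
  set w := (l.map b).sum with hwdef
  have hw : w % q = n % q := by rw [hwdef, hres, hl₀, hvmod]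
  have hwle : w ≤ q * s := by
    have := List.sum_le_card_nsmul (l.map b) s (by
      intro x hx; obtain ⟨i, _, rfl⟩ := List.mem_map.mp hx; exact hs i)
    rw [List.length_map] at this
    calc w ≤ l.length • s := this
      _ = l.length * s := smul_eq_mul _ _
      _ ≤ q * s := Nat.mul_le_mul_right s hlen
  have hwn : w ≤ n := hwle.trans ((Nat.mul_le_mul_right s hqs).trans hn)
  obtain ⟨t, ht⟩ := (Nat.modEq_iff_dvd' hwn).mp hw
  have hn2 : w + t * q = n := by rw [mul_comm t q, ← ht, Nat.add_sub_cancel' hwn]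
  have : ((l ++ List.replicate t i₀).map b).sum = n := by
    rw [List.map_append, List.sum_append, List.map_replicate, List.sum_replicate,
      smul_eq_mul, ← hwdef, ← hqdef]
    exact hn2
  rw [← this]
  exact list_sum_mem_tupleMonoid b _

lemma frob_le_of_gcd_one (b : ι → ℕ) [Nonempty ι] (hg : Finset.univ.gcd b = 1)
    (hpos : ∀ i, 0 < b i) (s : ℕ) (hs : ∀ i, b i ≤ s) : frob b ≤ s * s := by
  apply csSup_le'
  intro x hx
  by_contra hxs
  exact hx (ge_mem_tupleMonoid b hg hpos s hs (Classical.arbitrary ι) x (by omega))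

lemma frob_of_isEmpty (b : ι → ℕ) (h : IsEmpty ι) : frob b = 0 := by
  have hM : tupleMonoid b = {0} := by
    ext v; simp [tupleMonoid, Finset.univ_eq_empty]
  have hgap : gapSet b = {v | v ≠ 0} := by
    ext v; simp [gapSet, hM]
  have : ¬ BddAbove (gapSet b) := by
    rintro ⟨B, hB⟩
    have h1 : B + 1 ∈ gapSet b := by rw [hgap]; simp
    have := hB h1
    omega
  rw [frob, csSup_of_not_bddAbove this, csSup_empty]
  rfl

lemma frob_of_exists_one (b : ι → ℕ) (h : ∃ i, b i = 1) : frob b = 0 := by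
  obtain ⟨i, hi⟩ := h
  have hgap : gapSet b = ∅ := by
    ext n
    simp only [gapSet, Set.mem_setOf_eq, Set.mem_empty_iff_false, iff_false, not_not]
    refine ⟨fun j => if i = j then n else 0, ?_⟩
    simp [ite_mul, Finset.sum_ite_eq, hi]
  rw [frob, hgap, csSup_empty]
  rfl

end aux


lemma subtype_gcd {ι : Type} [Fintype ι] [DecidableEq ι] (P : ι → Prop) [DecidablePred P]
    (f : ι → ℕ) :
    Finset.univ.gcd (fun i : {x // P x} => f i.1) = (Finset.univ.filter P).gcd f := by
  apply Nat.dvd_antisymm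
  · apply Finset.dvd_gcd
    intro i hi
    have hP := (Finset.mem_filter.mp hi).2
    exact Finset.gcd_dvd (Finset.mem_univ (⟨i, hP⟩ : {x // P x}))
  · apply Finset.dvd_gcd
    intro j _
    exact Finset.gcd_dvd (Finset.mem_filter.mpr ⟨Finset.mem_univ _, j.2⟩)

lemma gcd_div_gcd_eq_one {ι : Type} [DecidableEq ι] (F : Finset ι) (f : ι → ℕ)
    (hne : F.Nonempty) (hpos : ∀ i ∈ F, 0 < f i) :
    F.gcd (fun i => f i / F.gcd f) = 1 := by
  set g := F.gcd f with hg
  have hg0 : g ≠ 0 := by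
    intro h
    obtain ⟨i, hi⟩ := hne
    have := Finset.gcd_eq_zero_iff.mp (hg ▸ h) i hi
    exact (hpos i hi).ne' this
  have h1 : F.gcd (fun i => g * (f i / g)) = g * F.gcd (fun i => f i / g) := by
    rw [Finset.gcd_mul_left]
    simp
  have h2 : F.gcd (fun i => g * (f i / g)) = g := by
    conv_rhs => rw [hg]
    apply Finset.gcd_congr rfl
    intro i hi
    exact Nat.mul_div_cancel' (Finset.gcd_dvd hi)
  have : g * F.gcd (fun i => f i / g) = g * 1 := by rw [← h1, h2, mul_one]
  exact Nat.eq_of_mul_eq_mul_left (Nat.pos_of_ne_zero hg0) this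

lemma binom_aux (m P : ℕ) (hm : 1 ≤ m) :
    m*m*(m+1)^(P+1) ≤ 2^(P+1) * m^(P+1) + m*m*m^(P+1) + (P+1) * (m*m*m^P) := by
  have hb : (m+1)^(P+1) = ∑ k ∈ Finset.range (P+2), m^k * (P+1).choose k := by
    have := add_pow m 1 (P+1)
    simpa using this
  rw [hb, Finset.mul_sum]
  rw [Finset.sum_range_succ, Finset.sum_range_succ]
  have e1 : m*m*(m^(P+1) * (P+1).choose (P+1)) = m*m*m^(P+1) := by
    rw [Nat.choose_self, mul_one]
  have e2 : m*m*(m^P * (P+1).choose P) = (P+1) * (m*m*m^P) := by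
    rw [Nat.choose_succ_self_right]
    ring
  rw [e1, e2]
  have e3 : ∑ k ∈ Finset.range P, m*m*(m^k * (P+1).choose k) ≤ 2^(P+1) * m^(P+1) := by
    calc ∑ k ∈ Finset.range P, m*m*(m^k * (P+1).choose k)
        ≤ ∑ k ∈ Finset.range P, m^(P+1) * (P+1).choose k := by
          apply Finset.sum_le_sum
          intro k hk
          have hk' : k + 2 ≤ P + 1 := by
            have := Finset.mem_range.mp hk; omega
          have : m*m*m^k ≤ m^(P+1) := by
            calc m*m*m^k = m^(k+2) := by ring
              _ ≤ m^(P+1) := Nat.pow_le_pow_right hm hk'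
          calc m*m*(m^k * (P+1).choose k) = (m*m*m^k) * (P+1).choose k := by ring
            _ ≤ m^(P+1) * (P+1).choose k := Nat.mul_le_mul_right _ this
      _ ≤ ∑ k ∈ Finset.range (P+2), m^(P+1) * (P+1).choose k := by
          apply Finset.sum_le_sum_of_subset
          intro k hk
          simp only [Finset.mem_range] at *
          omega
      _ = m^(P+1) * ∑ k ∈ Finset.range (P+2), (P+1).choose k := by rw [Finset.mul_sum]
      _ = m^(P+1) * 2^(P+1) := by rw [Nat.sum_range_choose]
      _ = 2^(P+1) * m^(P+1) := by ring
  omega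


lemma count_aux (P m : ℕ) :
    m^(P+1) + (P+1) * m^P ≤ ((Finset.univ : Finset (Fin (P+1) → Fin (m+1))).filter
      (fun μ => ¬ 2 ≤ (Finset.univ.filter (fun i => (μ i : ℕ) = m)).card)).card := by
  classical
  set p := P + 1 with hp
  set lst : Fin (m+1) := Fin.last m with hlst
  have hval : ∀ x : Fin (m+1), ((x : ℕ) = m ↔ x = lst) := by
    intro x
    constructor
    · intro h; apply Fin.ext; rw [h, hlst, Fin.val_last]
    · intro h; rw [h, hlst, Fin.val_last]
  set S0 : Finset (Fin p → Fin (m+1)) :=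
    Fintype.piFinset (fun _ => Finset.univ.erase lst) with hS0def
  set Si : Fin p → Finset (Fin p → Fin (m+1)) :=
    (fun i => Fintype.piFinset (fun j => if j = i then {lst} else Finset.univ.erase lst))
    with hSidef
  have cardS0 : S0.card = m^p := by
    rw [hS0def, Fintype.card_piFinset]
    have : (Finset.univ.erase lst).card = m := by
      rw [Finset.card_erase_of_mem (Finset.mem_univ _)]
      simp
    simp [this]
  have cardSi : ∀ i, (Si i).card = m^P := by
    intro i
    rw [hSidef, Fintype.card_piFinset]
    have h1 : ∀ j : Fin p, ((if j = i then ({lst} : Finset (Fin (m+1)))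
        else Finset.univ.erase lst)).card = if j = i then 1 else m := by
      intro j
      by_cases h : j = i
      · simp [h]
      · rw [if_neg h, if_neg h, Finset.card_erase_of_mem (Finset.mem_univ _)]
        simp
    rw [Finset.prod_congr rfl (fun j _ => h1 j)]
    rw [← Finset.mul_prod_erase Finset.univ _ (Finset.mem_univ i), if_pos rfl, one_mul]
    have h2 : ∀ j ∈ Finset.univ.erase i, (if j = i then 1 else m) = m := by
      intro j hj
      rw [if_neg (Finset.mem_erase.mp hj).1]
    rw [Finset.prod_congr rfl h2, Finset.prod_const, Finset.card_erase_of_mem (Finset.mem_univ _)]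
    simp [hp]
  have hfiltS0 : ∀ μ ∈ S0, (Finset.univ.filter (fun i => (μ i : ℕ) = m)) = ∅ := by
    intro μ hμ
    rw [Finset.eq_empty_iff_forall_notMem]
    intro i hi
    have h1 := (Finset.mem_filter.mp hi).2
    have h2 := Fintype.mem_piFinset.mp hμ i
    exact (Finset.mem_erase.mp h2).1 ((hval _).mp h1)
  have hfiltSi : ∀ i, ∀ μ ∈ Si i, (Finset.univ.filter (fun j => (μ j : ℕ) = m)) = {i} := by
    intro i μ hμ
    ext j
    simp only [Finset.mem_filter, Finset.mem_univ, true_and, Finset.mem_singleton]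
    have h2 := Fintype.mem_piFinset.mp hμ j
    constructor
    · intro h
      by_contra hji
      rw [if_neg hji] at h2
      exact (Finset.mem_erase.mp h2).1 ((hval _).mp h)
    · intro h
      subst h
      rw [if_pos rfl, Finset.mem_singleton] at h2
      rw [h2, hlst, Fin.val_last]
  set T : Finset (Fin p → Fin (m+1)) := S0 ∪ Finset.univ.biUnion Si with hTdef
  have hdisj0 : Disjoint S0 (Finset.univ.biUnion Si) := by
    rw [Finset.disjoint_left]
    intro μ h0 hb
    obtain ⟨i, _, hi⟩ := Finset.mem_biUnion.mp hb
    have := hfiltSi i μ hi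
    have h2 := hfiltS0 μ h0
    rw [h2] at this
    exact Finset.singleton_ne_empty i this.symm
  have hdisjSi : ∀ i ∈ (Finset.univ : Finset (Fin p)), ∀ j ∈ Finset.univ,
      i ≠ j → Disjoint (Si i) (Si j) := by
    intro i _ j _ hij
    rw [Finset.disjoint_left]
    intro μ hi hj
    have h1 := hfiltSi i μ hi
    have h2 := hfiltSi j μ hj
    rw [h1] at h2
    exact hij (Finset.singleton_injective h2)
  have cardT : T.card = m^p + p * m^P := by
    rw [hTdef, Finset.card_union_of_disjoint hdisj0, cardS0,
      Finset.card_biUnion hdisjSi]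
    have : ∑ i : Fin p, (Si i).card = ∑ _i : Fin p, m^P :=
      Finset.sum_congr rfl fun i _ => cardSi i
    rw [this, Finset.sum_const, Finset.card_univ, Fintype.card_fin, smul_eq_mul]
  have hsub : T ⊆ (Finset.univ : Finset (Fin p → Fin (m+1))).filter
      (fun μ => ¬ 2 ≤ (Finset.univ.filter (fun i => (μ i : ℕ) = m)).card) := by
    intro μ hμ
    rw [Finset.mem_filter]
    refine ⟨Finset.mem_univ _, ?_⟩
    rw [hTdef, Finset.mem_union] at hμ
    rcases hμ with h | h
    · rw [hfiltS0 μ h]; simp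
    · obtain ⟨i, _, hi⟩ := Finset.mem_biUnion.mp h
      rw [hfiltSi i μ hi]; simp
  calc m^p + p * m^P = T.card := cardT.symm
    _ ≤ _ := Finset.card_le_card hsub



/-- `r(a) := Σ_{μ ≤ λ} F(a^λ_μ)`, where `λ_i := max(a)` for all `i`,
`I^λ_μ := {i : μ_i = λ_i}`, and `a^λ_μ := (a_i / gcd(a_i : i ∈ I^λ_μ) : i ∈ I^λ_μ)`.
The tuples `μ ≤ λ` are encoded as functions `Fin p → Fin (max(a)+1)`. -/
noncomputable def rval {p : ℕ} (a : Fin p → ℕ) : ℕ :=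
  ∑ μ : Fin p → Fin (Finset.univ.sup a + 1),
    frob (fun i : {i : Fin p // (μ i : ℕ) = Finset.univ.sup a} =>
      a i.1 / (Finset.univ.filter
        (fun i : Fin p => (μ i : ℕ) = Finset.univ.sup a)).gcd a)

/-- For every primitive `p`-tuple `a`,
`r(a) ≤ (2·max(a))^p`. -/
theorem rval_le {p : ℕ} (a : Fin p → ℕ)
    (ha_pos : ∀ i, 0 < a i) (ha_inj : Function.Injective a)
    (ha_gcd : Finset.univ.gcd a = 1) :
    rval a ≤ (2 * Finset.univ.sup a) ^ p := by
  classical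
  obtain _ | P := p
  · exfalso
    rw [Finset.univ_eq_empty, Finset.gcd_empty] at ha_gcd
    exact absurd ha_gcd (by norm_num)
  set m := Finset.univ.sup a with hm
  have hm1 : 1 ≤ m := le_trans (ha_pos 0) (Finset.le_sup (Finset.mem_univ (0 : Fin (P+1))))
  have hterm : ∀ μ : Fin (P+1) → Fin (m + 1),
      frob (fun i : {i : Fin (P+1) // (μ i : ℕ) = m} =>
        a i.1 / (Finset.univ.filter (fun i : Fin (P+1) => (μ i : ℕ) = m)).gcd a)
      ≤ if 2 ≤ (Finset.univ.filter (fun i : Fin (P+1) => (μ i : ℕ) = m)).card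
        then m * m else 0 := by
    intro μ
    set F := Finset.univ.filter (fun i : Fin (P+1) => (μ i : ℕ) = m) with hF
    by_cases hF0 : F = ∅
    · have hie : IsEmpty {i : Fin (P+1) // (μ i : ℕ) = m} := by
        constructor
        rintro ⟨i, hi⟩
        have hmem : i ∈ F := by
          rw [hF]; exact Finset.mem_filter.mpr ⟨Finset.mem_univ _, hi⟩
        rw [hF0] at hmem
        exact absurd hmem (Finset.notMem_empty i)
      rw [frob_of_isEmpty _ hie]
      exact Nat.zero_le _
    by_cases hF1 : F.card = 1
    · obtain ⟨i, hFi⟩ := Finset.card_eq_one.mp hF1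
      have hi : (μ i : ℕ) = m := by
        have hmem : i ∈ F := hFi ▸ Finset.mem_singleton_self i
        rw [hF] at hmem
        exact (Finset.mem_filter.mp hmem).2
      have hzero : frob (fun i : {i : Fin (P+1) // (μ i : ℕ) = m} =>
          a i.1 / F.gcd a) = 0 := by
        apply frob_of_exists_one
        refine ⟨⟨i, hi⟩, ?_⟩
        show a i / F.gcd a = 1
        rw [hFi, Finset.gcd_singleton]
        have : normalize (a i) = a i := by simp
        rw [this, Nat.div_self (ha_pos i)]
      rw [hzero]
      exact Nat.zero_le _
    · have hne : F.Nonempty := Finset.nonempty_of_ne_empty hF0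
      have hcard2 : 2 ≤ F.card := by
        have h0 : F.card ≠ 0 := by
          rw [Finset.card_ne_zero]; exact hne
        omega
      rw [if_pos hcard2]
      obtain ⟨i0, hi0⟩ := id hne
      have hi0' : (μ i0 : ℕ) = m := by
        rw [hF] at hi0; exact (Finset.mem_filter.mp hi0).2
      haveI : Nonempty {i : Fin (P+1) // (μ i : ℕ) = m} := ⟨⟨i0, hi0'⟩⟩
      apply frob_le_of_gcd_one
      · rw [subtype_gcd (fun i : Fin (P+1) => (μ i : ℕ) = m) (fun i => a i / F.gcd a)]
        exact gcd_div_gcd_eq_one F a hne (fun i _ => ha_pos i)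
      · intro i
        apply Nat.div_pos
        · exact Nat.le_of_dvd (ha_pos i.1) (Finset.gcd_dvd (by
            rw [hF]; exact Finset.mem_filter.mpr ⟨Finset.mem_univ _, i.2⟩))
        · rw [Nat.pos_iff_ne_zero]
          intro h
          have := Finset.gcd_eq_zero_iff.mp h i0 hi0
          exact (ha_pos i0).ne' this
      · intro i
        exact (Nat.div_le_self _ _).trans (Finset.le_sup (Finset.mem_univ i.1))
  have hsum : rval a ≤ ((Finset.univ : Finset (Fin (P+1) → Fin (m+1))).filter
      (fun μ => 2 ≤ (Finset.univ.filter (fun i : Fin (P+1) => (μ i : ℕ) = m)).card)).card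
      * (m * m) := by
    rw [rval]
    calc ∑ μ : Fin (P+1) → Fin (m+1),
        frob (fun i : {i : Fin (P+1) // (μ i : ℕ) = m} =>
          a i.1 / (Finset.univ.filter (fun i : Fin (P+1) => (μ i : ℕ) = m)).gcd a)
        ≤ ∑ μ : Fin (P+1) → Fin (m+1),
          if 2 ≤ (Finset.univ.filter (fun i : Fin (P+1) => (μ i : ℕ) = m)).card
          then m * m else 0 := Finset.sum_le_sum (fun μ _ => hterm μ)
      _ = ∑ μ ∈ (Finset.univ : Finset (Fin (P+1) → Fin (m+1))).filter
            (fun μ => 2 ≤ (Finset.univ.filter (fun i : Fin (P+1) => (μ i : ℕ) = m)).card),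
            (m * m) := (Finset.sum_filter _ _).symm
      _ = _ := by rw [Finset.sum_const, smul_eq_mul]
  set X := ((Finset.univ : Finset (Fin (P+1) → Fin (m+1))).filter
      (fun μ => 2 ≤ (Finset.univ.filter (fun i : Fin (P+1) => (μ i : ℕ) = m)).card)).card
    with hX
  set Y := ((Finset.univ : Finset (Fin (P+1) → Fin (m+1))).filter
      (fun μ => ¬ 2 ≤ (Finset.univ.filter (fun i : Fin (P+1) => (μ i : ℕ) = m)).card)).card
    with hY
  have hXY : X + Y = (m+1)^(P+1) := by
    rw [hX, hY, Finset.card_filter_add_card_filter_not, Finset.card_univ,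
      Fintype.card_fun, Fintype.card_fin, Fintype.card_fin]
  have hYge : m^(P+1) + (P+1) * m^P ≤ Y := count_aux P m
  have hbin := binom_aux m P hm1
  have h1 : X*(m*m) + (m^(P+1) + (P+1)*m^P)*(m*m) ≤ (m+1)^(P+1)*(m*m) := by
    calc X*(m*m) + (m^(P+1) + (P+1)*m^P)*(m*m)
        ≤ X*(m*m) + Y*(m*m) := Nat.add_le_add_left (Nat.mul_le_mul_right _ hYge) _
      _ = (m+1)^(P+1)*(m*m) := by rw [← add_mul, hXY]
  have h2 : (m+1)^(P+1)*(m*m) ≤ 2^(P+1)*m^(P+1) + (m^(P+1) + (P+1)*m^P)*(m*m) := by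
    calc (m+1)^(P+1)*(m*m) = m*m*(m+1)^(P+1) := by ring
      _ ≤ 2^(P+1) * m^(P+1) + m*m*m^(P+1) + (P+1) * (m*m*m^P) := hbin
      _ = 2^(P+1)*m^(P+1) + (m^(P+1) + (P+1)*m^P)*(m*m) := by ring
  have h3 : X*(m*m) ≤ 2^(P+1)*m^(P+1) := by
    have := h1.trans h2
    exact Nat.add_le_add_iff_right.mp this
  calc rval a ≤ X*(m*m) := hsum
    _ ≤ 2^(P+1)*m^(P+1) := h3
    _ = (2*m)^(P+1) := (mul_pow 2 m (P+1)).symm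
end

section
/- For every primitive pair a = (a_1,a_2) (i.e., p = 2), one has r(a) = F(a), the Frobenius number of a. -/
lemma frob_of_isEmpty_s6 {ι : Type} [Fintype ι] [IsEmpty ι] (a : ι → ℕ) : frob a = 0 := by
  have hg : gapSet a = {v | v ≠ 0} := by
    ext v
    simp [gapSet, tupleMonoid, Finset.univ_eq_empty, eq_comm]
  rw [frob, hg]
  have : ¬ BddAbove {v : ℕ | v ≠ 0} := by
    intro ⟨n, hn⟩
    have := hn (show n + 1 ∈ {v : ℕ | v ≠ 0} by simp)
    omega
  simp [csSup_of_not_bddAbove this]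

lemma frob_of_one {ι : Type} [Fintype ι] (a : ι → ℕ) (i : ι) (hi : a i = 1) : frob a = 0 := by
  have hg : gapSet a = ∅ := by
    ext v
    simp only [gapSet, Set.mem_setOf_eq, Set.mem_empty_iff_false, iff_false, not_not]
    classical
    refine ⟨Pi.single i v, ?_⟩
    rw [Finset.sum_eq_single i (fun b _ hb => by simp [Pi.single_eq_of_ne hb])
      (fun h => absurd (Finset.mem_univ i) h)]
    simp [hi]
  simp [frob, hg]

lemma frob_comp_equiv {ι κ : Type} [Fintype ι] [Fintype κ] (e : κ ≃ ι) (a : ι → ℕ) :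
    frob (a ∘ e) = frob a := by
  have : tupleMonoid (a ∘ e) = tupleMonoid a := by
    ext v
    constructor
    · rintro ⟨μ, rfl⟩
      refine ⟨μ ∘ e.symm, ?_⟩
      exact Fintype.sum_equiv e (fun k => μ k * (a ∘ e) k) (fun j => (μ ∘ e.symm) j * a j) (fun k => by simp)
    · rintro ⟨μ, rfl⟩
      refine ⟨μ ∘ e, ?_⟩
      exact (Fintype.sum_equiv e (fun k => (μ ∘ e) k * (a ∘ e) k) (fun j => μ j * a j) (fun k => rfl)).symm
  simp [frob, gapSet, this]

/-- For every primitive pair `a = (a₁,a₂)`,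
one has `r(a) = F(a)`, the Frobenius number of `a`. -/
theorem rval_eq_frob_of_pair (a : Fin 2 → ℕ)
    (ha_pos : ∀ i, 0 < a i) (ha_inj : Function.Injective a)
    (ha_gcd : Finset.univ.gcd a = 1) :
    rval a = frob a := by
  classical
  set m := Finset.univ.sup a with hm
  set μ₀ : Fin 2 → Fin (m + 1) := fun _ => ⟨m, Nat.lt_succ_self m⟩ with hμ₀
  rw [rval]
  rw [Finset.sum_eq_single_of_mem μ₀ (Finset.mem_univ μ₀)]
  · -- the main term equals frob a
    have hall : ∀ i : Fin 2, ((μ₀ i : ℕ) = m) := fun i => rfl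
    have hfilter : (Finset.univ.filter (fun i : Fin 2 => (μ₀ i : ℕ) = m)) = Finset.univ :=
      Finset.filter_true_of_mem (fun i _ => hall i)
    have hfun : (fun i : {i : Fin 2 // (μ₀ i : ℕ) = m} =>
        a i.1 / (Finset.univ.filter (fun i : Fin 2 => (μ₀ i : ℕ) = m)).gcd a)
        = a ∘ (Equiv.subtypeUnivEquiv hall) := by
      funext i
      simp [hfilter, ← hm, ha_gcd, Equiv.subtypeUnivEquiv]
    rw [hfun, frob_comp_equiv]
  · -- other terms vanish
    intro μ _ hμ
    by_cases h0 : (μ 0 : ℕ) = m <;> by_cases h1 : (μ 1 : ℕ) = m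
    · exfalso
      apply hμ
      funext i
      fin_cases i
      · exact Fin.ext h0
      · exact Fin.ext h1
    · refine frob_of_one _ ⟨0, h0⟩ ?_
      have hfilter : (Finset.univ.filter (fun i : Fin 2 => (μ i : ℕ) = m)) = {0} := by
        ext i
        fin_cases i <;> simp [h0, h1]
      change a _ / (Finset.univ.filter (fun i : Fin 2 => (μ i : ℕ) = m)).gcd a = 1
      simp only [hfilter, Finset.gcd_singleton]
      rw [normalize_eq]
      exact Nat.div_self (ha_pos 0)
    · refine frob_of_one _ ⟨1, h1⟩ ?_
      have hfilter : (Finset.univ.filter (fun i : Fin 2 => (μ i : ℕ) = m)) = {1} := by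
        ext i
        fin_cases i <;> simp [h0, h1]
      change a _ / (Finset.univ.filter (fun i : Fin 2 => (μ i : ℕ) = m)).gcd a = 1
      simp only [hfilter, Finset.gcd_singleton]
      rw [normalize_eq]
      exact Nat.div_self (ha_pos 1)
    · haveI : IsEmpty {i : Fin 2 // (μ i : ℕ) = m} := by
        refine ⟨fun ⟨i, hi⟩ => ?_⟩
        fin_cases i <;> simp_all
      exact frob_of_isEmpty_s6 _
end

section
/- Let S ⊆ {0,1}^n be nonempty, w ∈ ℤ^n, and let L, U ⊆ {1,…,n} be disjoint. Put α := 1 + 2n·max_j |w_j| and v := max{(w + α(1_U − 1_L))·x : x ∈ S} − |U|·α. Then exactly one of the following holds: (i) v > −α/2, in which case S^U_L is nonempty, max{w·x : x ∈ S^U_L} = v, and the set of maximizers of w·x over S^U_L equals the set of maximizers of (w + α(1_U − 1_L))·x over S; or (ii) v < −α/2, in which case S^U_L is empty. -/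
/-- 0/1 points `x ∈ {0,1}^n` are encoded as subsets of `{1,…,n}` (their supports),
so that `w·x = ∑_{j ∈ x} w_j`. The face `S^U_L` consists of the `x ∈ S` with
`x_j = 0` for `j ∈ L` (i.e. `x` disjoint from `L`) and `x_j = 1` for `j ∈ U`
(i.e. `U ⊆ x`). -/
def face {n : ℕ} (S : Set (Finset (Fin n))) (L U : Finset (Fin n)) :
    Set (Finset (Fin n)) :=
  {x ∈ S | (∀ j ∈ L, j ∉ x) ∧ U ⊆ x}

/-- With `α := 1 + 2n·max_j |w_j|`, the perturbed objective
`c := w + α(1_U − 1_L)`, and `v := max{c·x : x ∈ S} − |U|·α`, exactly one of: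
(i) `v > −α/2`, and then `S^U_L ≠ ∅`, `max{w·x : x ∈ S^U_L} = v`, and the
maximizers of `w·x` over `S^U_L` are exactly the maximizers of `c·x` over `S`;
(ii) `v < −α/2`, and then `S^U_L = ∅`.
(The comparisons with `−α/2` are stated integrally as `2v > −α`, `2v < −α`;
these two cases are mutually exclusive.) -/
theorem face_reduction {n : ℕ} (S : Set (Finset (Fin n))) (hS : S.Nonempty)
    (w : Fin n → ℤ) (L U : Finset (Fin n)) (hLU : Disjoint L U)
    (α : ℤ) (hα : α = 1 + 2 * (n : ℤ) * ((Finset.univ.sup fun j => (w j).natAbs : ℕ) : ℤ))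
    (c : Fin n → ℤ)
    (hc : c = fun j => w j + α * ((if j ∈ U then 1 else 0) - (if j ∈ L then 1 else 0)))
    (xbar : Finset (Fin n)) (hxbar : xbar ∈ S)
    (hmax : ∀ x ∈ S, ∑ j ∈ x, c j ≤ ∑ j ∈ xbar, c j)
    (v : ℤ) (hv : v = (∑ j ∈ xbar, c j) - (U.card : ℤ) * α) :
    (-α < 2 * v ∧ (face S L U).Nonempty ∧
      IsGreatest {z : ℤ | ∃ x ∈ face S L U, z = ∑ j ∈ x, w j} v ∧
      {x ∈ face S L U | ∀ y ∈ face S L U, ∑ j ∈ y, w j ≤ ∑ j ∈ x, w j} =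
        {x ∈ S | ∀ y ∈ S, ∑ j ∈ y, c j ≤ ∑ j ∈ x, c j}) ∨
    (2 * v < -α ∧ face S L U = ∅) := by
  set W : ℤ := ((Finset.univ.sup fun j => (w j).natAbs : ℕ) : ℤ) with hWdef
  have hWnn : 0 ≤ W := Int.natCast_nonneg _
  -- bound on w·x
  have hWb : ∀ x : Finset (Fin n), |∑ j ∈ x, w j| ≤ (n : ℤ) * W := by
    intro x
    calc |∑ j ∈ x, w j| ≤ ∑ j ∈ x, |w j| := Finset.abs_sum_le_sum_abs _ _
      _ ≤ ∑ j ∈ x, W := by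
          refine Finset.sum_le_sum fun j _ => ?_
          rw [Int.abs_eq_natAbs, hWdef]
          exact_mod_cast Finset.le_sup (f := fun j => (w j).natAbs) (Finset.mem_univ j)
      _ = (x.card : ℤ) * W := by rw [Finset.sum_const, nsmul_eq_mul]
      _ ≤ (n : ℤ) * W := by
          refine mul_le_mul_of_nonneg_right ?_ hWnn
          exact_mod_cast (x.card_le_univ).trans_eq (by simp)
  -- sum of c in terms of sum of w
  have hsum : ∀ x : Finset (Fin n),
      ∑ j ∈ x, c j = ∑ j ∈ x, w j + α * (((x ∩ U).card : ℤ) - ((x ∩ L).card : ℤ)) := by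
    intro x
    simp only [hc]
    rw [Finset.sum_add_distrib, ← Finset.mul_sum, Finset.sum_sub_distrib]
    simp only [Finset.sum_ite_mem, Finset.sum_const, nsmul_eq_mul, mul_one]
  -- sum of c on the face
  have hfsum : ∀ x : Finset (Fin n), (∀ j ∈ L, j ∉ x) → U ⊆ x →
      ∑ j ∈ x, c j = ∑ j ∈ x, w j + α * (U.card : ℤ) := by
    intro x h1 h2
    rw [hsum x]
    have e1 : x ∩ U = U := Finset.inter_eq_right.mpr h2
    have e2 : x ∩ L = ∅ := by
      rw [← Finset.disjoint_iff_inter_eq_empty]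
      exact Finset.disjoint_left.mpr fun j hj hjL => h1 j hjL hj
    rw [e1, e2]
    simp
  -- sum of c off the face
  have hnf : ∀ x : Finset (Fin n), ¬ ((∀ j ∈ L, j ∉ x) ∧ U ⊆ x) →
      ∑ j ∈ x, c j ≤ ∑ j ∈ x, w j + α * ((U.card : ℤ) - 1) := by
    intro x hx
    rw [hsum x]
    have hαpos : 0 < α := by
      rw [hα]; nlinarith [hWnn, Int.natCast_nonneg n]
    have hcard : ((x ∩ U).card : ℤ) - ((x ∩ L).card : ℤ) ≤ (U.card : ℤ) - 1 := by
      rw [not_and_or] at hx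
      rcases hx with h | h
      · push_neg at h
        obtain ⟨j, hjL, hjx⟩ := h
        have h1 : 1 ≤ (x ∩ L).card :=
          Finset.card_pos.mpr ⟨j, Finset.mem_inter.mpr ⟨hjx, hjL⟩⟩
        have h2 : (x ∩ U).card ≤ U.card := Finset.card_le_card Finset.inter_subset_right
        omega
      · obtain ⟨j, hjU, hjx⟩ := Finset.not_subset.mp h
        have hsub : x ∩ U ⊆ U.erase j := by
          intro k hk
          rcases Finset.mem_inter.mp hk with ⟨hkx, hkU⟩
          exact Finset.mem_erase.mpr ⟨fun he => hjx (he ▸ hkx), hkU⟩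
        have h2 := Finset.card_le_card hsub
        have h3 : (U.erase j).card = U.card - 1 := Finset.card_erase_of_mem hjU
        have h4 : 1 ≤ U.card := Finset.card_pos.mpr ⟨j, hjU⟩
        omega
    nlinarith [hαpos]
  by_cases hface : (face S L U).Nonempty
  · left
    obtain ⟨x0, hx0S, hx0L, hx0U⟩ := hface
    have hwx0 := abs_le.mp (hWb x0)
    have hwxb := abs_le.mp (hWb xbar)
    -- xbar is in the face
    have hxbf : (∀ j ∈ L, j ∉ xbar) ∧ U ⊆ xbar := by
      by_contra hcon
      have h1 := hnf xbar hcon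
      have h2 := hmax x0 hx0S
      rw [hfsum x0 hx0L hx0U] at h2
      rw [hα] at h1 h2
      nlinarith [hwx0.1, hwxb.2]
    have hxbface : xbar ∈ face S L U := ⟨hxbar, hxbf.1, hxbf.2⟩
    have hvw : v = ∑ j ∈ xbar, w j := by
      rw [hv, hfsum xbar hxbf.1 hxbf.2]; ring
    -- upper bound over face
    have hub : ∀ x : Finset (Fin n), x ∈ face S L U → ∑ j ∈ x, w j ≤ v := by
      intro x hx
      obtain ⟨hxS, hxL, hxU⟩ := hx
      have := hmax x hxS
      rw [hfsum x hxL hxU, hfsum xbar hxbf.1 hxbf.2] at this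
      rw [hvw]; linarith
    refine ⟨?_, ⟨xbar, hxbface⟩, ⟨⟨xbar, hxbface, hvw⟩, ?_⟩, ?_⟩
    · rw [hvw] at *
      rw [hα]
      nlinarith [hwxb.1, hWb xbar]
    · rintro z ⟨x, hx, rfl⟩
      exact hub x hx
    · ext x
      simp only [Set.mem_setOf_eq]
      constructor
      · rintro ⟨hxf, hxm⟩
        obtain ⟨hxS, hxL, hxU⟩ := hxf
        refine ⟨hxS, fun y hyS => ?_⟩
        have hge : ∑ j ∈ xbar, w j ≤ ∑ j ∈ x, w j := hxm xbar hxbface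
        have hcx : ∑ j ∈ xbar, c j ≤ ∑ j ∈ x, c j := by
          rw [hfsum x hxL hxU, hfsum xbar hxbf.1 hxbf.2]; linarith
        exact (hmax y hyS).trans hcx
      · rintro ⟨hxS, hxm⟩
        have hcx : ∑ j ∈ x, c j = ∑ j ∈ xbar, c j :=
          le_antisymm (hmax x hxS) (hxm xbar hxbar)
        have hxf : (∀ j ∈ L, j ∉ x) ∧ U ⊆ x := by
          by_contra hcon
          have h1 := hnf x hcon
          have h2 : ∑ j ∈ x0, c j ≤ ∑ j ∈ x, c j := hcx ▸ hmax x0 hx0S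
          rw [hfsum x0 hx0L hx0U] at h2
          have := abs_le.mp (hWb x)
          rw [hα] at h1
          nlinarith [hwx0.1, this.2]
        refine ⟨⟨hxS, hxf.1, hxf.2⟩, ?_⟩
        rintro y ⟨hyS, hyL, hyU⟩
        have := hmax y hyS
        rw [hfsum y hyL hyU] at this
        have h2 : ∑ j ∈ x, c j = ∑ j ∈ x, w j + α * (U.card : ℤ) := hfsum x hxf.1 hxf.2
        have h3 := hfsum xbar hxbf.1 hxbf.2
        linarith [this, hcx, h2, h3]
  · right
    rw [Set.not_nonempty_iff_eq_empty] at hface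
    refine ⟨?_, hface⟩
    have hxbnf : ¬ ((∀ j ∈ L, j ∉ xbar) ∧ U ⊆ xbar) := by
      intro h
      exact absurd hface (Set.nonempty_iff_ne_empty.mp ⟨xbar, hxbar, h.1, h.2⟩)
    have h1 := hnf xbar hxbnf
    have hwxb := abs_le.mp (hWb xbar)
    rw [hv, hα] at *
    nlinarith [hwxb.2, h1]
end

section
/- Let a = (a_1,…,a_p) be a primitive p-tuple, S ⊆ {0,1}^n an independence system, w ∈ {a_1,…,a_p}^n, and define λ ∈ ℤ_+^p by λ_i := max(a) for all i. Let μ ≤ λ be such that S^λ_μ ≠ ∅, let x_μ be any maximizer of w·x over S^λ_μ, and let T := {x ∈ {0,1}^n : x ≤ x_μ}. Then |w·S^λ_μ \ w·T| ≤ |G(a^λ_μ)| ≤ F(a^λ_μ). -/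
/-- 0/1 points `x ∈ {0,1}^n` are encoded as subsets of `{1,…,n}` (their supports);
`x ≤ y` is `x ⊆ y` and `w·x = ∑_{j ∈ x} w_j`.
Here `λ_i(x) = |supp(x) ∩ N_i|` where `N_i = {j : w_j = a_i}`. -/
def lamCoord {n p : ℕ} (a : Fin p → ℕ) (w : Fin n → ℕ)
    (x : Finset (Fin n)) (i : Fin p) : ℕ :=
  (x.filter fun j => w j = a i).card

/-- The block `S^λ_μ` of `S` induced by `μ ≤ λ`. -/
def block {n p : ℕ} (a : Fin p → ℕ) (w : Fin n → ℕ) (S : Set (Finset (Fin n)))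
    (lam μ : Fin p → ℕ) : Set (Finset (Fin n)) :=
  {x ∈ S | ∀ i, (μ i < lam i → lamCoord a w x i = μ i) ∧
                (μ i = lam i → μ i ≤ lamCoord a w x i)}

/-- The subtuple `a^λ_μ := (a_i / gcd(a_i : i ∈ I^λ_μ) : i ∈ I^λ_μ)` where
`I^λ_μ := {i : μ_i = λ_i}` (the empty tuple if `I^λ_μ = ∅`). -/
def subTuple {p : ℕ} (a lam μ : Fin p → ℕ) : {i : Fin p // μ i = lam i} → ℕ :=
  fun i => a i.1 / (Finset.univ.filter (fun i : Fin p => μ i = lam i)).gcd a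

open Finset

lemma finsetGcdBezout {ι : Type} [DecidableEq ι] (s : Finset ι) (f : ι → ℕ) :
    ∃ z : ι → ℤ, ((s.gcd f : ℕ) : ℤ) = ∑ i ∈ s, z i * (f i : ℤ) := by
  induction s using Finset.induction_on with
  | empty => exact ⟨0, by simp⟩
  | @insert i s hi ih =>
    obtain ⟨z, hz⟩ := ih
    set A := Nat.gcdA (f i) (s.gcd f) with hA
    set B := Nat.gcdB (f i) (s.gcd f) with hB
    refine ⟨Function.update (fun j => B * z j) i A, ?_⟩
    rw [Finset.gcd_insert, Finset.sum_insert hi, Function.update_self]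
    have hrest : ∑ j ∈ s, Function.update (fun j => B * z j) i A j * (f j : ℤ)
        = B * ∑ j ∈ s, z j * (f j : ℤ) := by
      rw [Finset.mul_sum]
      refine Finset.sum_congr rfl fun j hj => ?_
      rw [Function.update_of_ne (by rintro rfl; exact hi hj)]
      ring
    rw [hrest, ← hz]
    have hgcd : ((Nat.gcd (f i) (s.gcd f) : ℕ) : ℤ) = (f i : ℤ) * A + ((s.gcd f : ℕ) : ℤ) * B :=
      Nat.gcd_eq_gcd_ab _ _
    have hg2 : gcd (f i) (s.gcd f) = Nat.gcd (f i) (s.gcd f) := rfl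
    rw [hg2, hgcd]
    ring

lemma zero_mem_tupleMonoid {ι : Type} [Fintype ι] (b : ι → ℕ) : 0 ∈ tupleMonoid b :=
  ⟨0, by simp⟩

lemma gap_ncard_le_frob {ι : Type} [Fintype ι] (b : ι → ℕ) :
    (gapSet b).ncard ≤ frob b := by
  by_cases hfin : (gapSet b).Finite
  · rcases Set.eq_empty_or_nonempty (gapSet b) with he | hne
    · simp [he]
    · have hsub : gapSet b ⊆ Set.Icc 1 (frob b) := by
        intro g hg
        refine ⟨?_, le_csSup (hfin.bddAbove) hg⟩
        rcases Nat.eq_zero_or_pos g with rfl | h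
        · exact absurd (zero_mem_tupleMonoid b) hg
        · exact h
      calc (gapSet b).ncard ≤ (Set.Icc 1 (frob b)).ncard := by
            refine Set.ncard_le_ncard hsub ?_
            rw [← Finset.coe_Icc]; exact (Finset.Icc 1 (frob b)).finite_toSet
        _ = frob b := by
            rw [← Finset.coe_Icc, Set.ncard_coe_finset, Nat.card_Icc]; omega
  · rw [Set.Infinite.ncard hfin]
    exact Nat.zero_le _

lemma gap_bdd {ι : Type} [Fintype ι] (b : ι → ℕ) (hgcd : Finset.univ.gcd b = 1) :
    ∃ N, ∀ v, N ≤ v → v ∈ tupleMonoid b := by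
  classical
  obtain ⟨z, hz⟩ := finsetGcdBezout Finset.univ b
  rw [hgcd] at hz
  set P : ℕ := ∑ i, (z i).toNat * b i with hP
  set Q : ℕ := ∑ i, (-(z i)).toNat * b i with hQ
  have hPQ : (P : ℤ) = (Q : ℤ) + 1 := by
    have hcast : (P : ℤ) - (Q : ℤ) = ∑ i : ι, z i * (b i : ℤ) := by
      rw [hP, hQ]
      push_cast
      rw [← Finset.sum_sub_distrib]
      refine Finset.sum_congr rfl fun x _ => ?_
      have hzx : (((z x).toNat : ℤ)) - (((-z x).toNat : ℤ)) = z x := by omega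
      rw [← sub_mul, hzx]
    rw [← hz] at hcast
    simp only [Nat.cast_one] at hcast
    omega
  have hPQ' : P = Q + 1 := by exact_mod_cast hPQ
  refine ⟨Q * Q, fun v hv => ?_⟩
  rcases Nat.eq_zero_or_pos Q with hQ0 | hQpos
  · refine ⟨fun i => v * (z i).toNat, ?_⟩
    have : P = 1 := by omega
    calc v = v * P := by rw [this, Nat.mul_one]
      _ = ∑ i, v * (z i).toNat * b i := by
          rw [hP, Finset.mul_sum]
          exact Finset.sum_congr rfl fun i _ => by ring
  · set r := v % Q with hr
    set k := v / Q with hk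
    have hrQ : r < Q := Nat.mod_lt _ hQpos
    have hkr : r ≤ k := by
      have : Q ≤ k := by
        rw [hk]
        exact Nat.le_div_iff_mul_le hQpos |>.mpr (by nlinarith)
      omega
    refine ⟨fun i => r * (z i).toNat + (k - r) * (-(z i)).toNat, ?_⟩
    have hsum : ∑ i, (r * (z i).toNat + (k - r) * (-(z i)).toNat) * b i
        = r * P + (k - r) * Q := by
      rw [hP, hQ, Finset.mul_sum, Finset.mul_sum, ← Finset.sum_add_distrib]
      exact Finset.sum_congr rfl fun i _ => by ring
    rw [hsum]
    have h1 : r * P = r * Q + r := by rw [hPQ']; ring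
    have h2 : (k - r) * Q + r * Q = k * Q := by
      rw [← Nat.add_mul, Nat.sub_add_cancel hkr]
    have h3 : Q * k + r = v := Nat.div_add_mod v Q
    have h4 : Q * k = k * Q := Nat.mul_comm _ _
    omega

lemma exchange {ι : Type} [Fintype ι] [DecidableEq ι] (b u : ι → ℕ) (m : ℕ)
    (hb : ∀ i, 0 < b i) (hbm : ∀ i, b i ≤ m) (hum : ∀ i, m ≤ u i)
    (h : ℕ) (hh : h ≤ ∑ i, (u i - m) * b i) :
    ∀ (M : ℕ) (ν : ι → ℕ), (∑ i, (ν i - u i)) ≤ M → (∑ i, ν i * b i = h) →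
      ∃ ν' : ι → ℕ, (∑ i, ν' i * b i = h) ∧ ∀ i, ν' i ≤ u i := by
  intro M
  induction M with
  | zero =>
    intro ν hM hsum
    refine ⟨ν, hsum, fun i => ?_⟩
    have := Finset.sum_eq_zero_iff.mp (Nat.le_zero.mp hM) i (Finset.mem_univ i)
    omega
  | succ M ih =>
    intro ν hM hsum
    by_cases hall : ∀ i, ν i ≤ u i
    · exact ⟨ν, hsum, hall⟩
    push_neg at hall
    obtain ⟨i, hi⟩ := hall
    have hex : ∃ k, ν k * b k < (u k - m) * b k := by
      by_contra hc
      push_neg at hc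
      have hlt : ∑ j, (u j - m) * b j < ∑ j, ν j * b j := by
        refine Finset.sum_lt_sum (fun j _ => hc j) ⟨i, Finset.mem_univ i, ?_⟩
        have h1 : (u i - m) * b i ≤ u i * b i := Nat.mul_le_mul_right _ (Nat.sub_le _ _)
        have h2 : u i * b i < ν i * b i := by
          exact Nat.mul_lt_mul_of_lt_of_le hi (le_refl _) (hb i)
        omega
      omega
    obtain ⟨k, hk⟩ := hex
    have hνk : ν k < u k - m := lt_of_mul_lt_mul_right hk (Nat.zero_le _)
    have hki : k ≠ i := by
      rintro rfl
      have := hum k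
      omega
    have hbki : b k ≤ ν i := le_trans (le_trans (hbm k) (hum i)) (le_of_lt hi)
    set ν' : ι → ℕ := fun j => if j = i then ν i - b k else if j = k then ν k + b i else ν j
      with hν'
    have e1 : ∀ (f : ι → ℕ), ∑ j, f j = f i + f k + ∑ j ∈ (Finset.univ.erase i).erase k, f j := by
      intro f
      rw [← Finset.add_sum_erase _ f (Finset.mem_univ i),
        ← Finset.add_sum_erase _ f (Finset.mem_erase.mpr ⟨hki, Finset.mem_univ k⟩)]
      ring
    have hrest : ∀ (g g' : ι → ℕ), (∀ j, j ≠ i → j ≠ k → g j = g' j) →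
        ∑ j ∈ (Finset.univ.erase i).erase k, g j = ∑ j ∈ (Finset.univ.erase i).erase k, g' j := by
      intro g g' hgg
      refine Finset.sum_congr rfl fun j hj => ?_
      have hj1 : j ≠ k := (Finset.mem_erase.mp hj).1
      have hj2 : j ≠ i := (Finset.mem_erase.mp (Finset.mem_erase.mp hj).2).1
      exact hgg j hj2 hj1
    have hν'i : ν' i = ν i - b k := by rw [hν']; simp
    have hν'k : ν' k = ν k + b i := by rw [hν']; simp [hki]
    have hν'j : ∀ j, j ≠ i → j ≠ k → ν' j = ν j := by
      intro j h1 h2; rw [hν']; simp [h1, h2]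
    have hsum' : ∑ j, ν' j * b j = h := by
      rw [e1 (fun j => ν' j * b j), hrest (fun j => ν' j * b j) (fun j => ν j * b j)
        (fun j h1 h2 => by show ν' j * b j = ν j * b j; rw [hν'j j h1 h2])]
      rw [e1 (fun j => ν j * b j)] at hsum
      have hpair : ν' i * b i + ν' k * b k = ν i * b i + ν k * b k := by
        rw [hν'i, hν'k]
        obtain ⟨c, hc⟩ := Nat.exists_eq_add_of_le hbki
        rw [hc]
        rw [Nat.add_sub_cancel_left]
        ring
      omega
    have hmeas : ∑ j, (ν' j - u j) ≤ M := by
      have hA := e1 (fun j => ν' j - u j)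
      have hB := e1 (fun j => ν j - u j)
      have hC := hrest (fun j => ν' j - u j) (fun j => ν j - u j)
        (fun j ha hb => by show ν' j - u j = ν j - u j; rw [hν'j j ha hb])
      have hik : ν' i - u i + 1 ≤ ν i - u i := by
        rw [hν'i]
        have := hb k
        omega
      have hkk : ν' k - u k = 0 := by
        rw [hν'k]
        have := hbm i
        have := hum k
        omega
      have hkk' : ν k - u k = 0 := by
        have := hum k
        omega
      omega
    exact ih ν' hmeas hsum'

lemma sum_fiber {n p : ℕ} (a : Fin p → ℕ) (ha_inj : Function.Injective a)
    (w : Fin n → ℕ) (hw : ∀ j, ∃ i, w j = a i) (x : Finset (Fin n)) :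
    ∑ j ∈ x, w j = ∑ i, a i * lamCoord a w x i := by
  classical
  have hgs : ∀ j, w j = a ((hw j).choose) := fun j => (hw j).choose_spec
  have hfe : ∀ i, x.filter (fun j => w j = a i) = x.filter (fun j => (hw j).choose = i) := by
    intro i
    ext j
    simp only [Finset.mem_filter, and_congr_right_iff]
    intro _
    constructor
    · intro hj; exact ha_inj (by rw [← hgs j, hj])
    · intro hj; rw [hgs j, hj]
  calc ∑ j ∈ x, w j
      = ∑ i, ∑ j ∈ x.filter (fun j => (hw j).choose = i), w j :=
        (Finset.sum_fiberwise_of_maps_to (fun j _ => Finset.mem_univ _) w).symm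
    _ = ∑ i, a i * lamCoord a w x i := by
        refine Finset.sum_congr rfl fun i _ => ?_
        have hconst : ∑ j ∈ x.filter (fun j => (hw j).choose = i), w j
            = ∑ j ∈ x.filter (fun j => (hw j).choose = i), a i := by
          refine Finset.sum_congr rfl fun j hj => ?_
          rw [hgs j, (Finset.mem_filter.mp hj).2]
        rw [hconst, Finset.sum_const, smul_eq_mul, lamCoord, hfe i]
        exact Nat.mul_comm _ _

lemma exists_subset_lam {n p : ℕ} (a : Fin p → ℕ) (ha_inj : Function.Injective a)
    (w : Fin n → ℕ) (x : Finset (Fin n)) (t : Fin p → ℕ)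
    (ht : ∀ i, t i ≤ lamCoord a w x i) :
    ∃ y, y ⊆ x ∧ ∀ i, lamCoord a w y i = t i := by
  classical
  have hch : ∀ i, ∃ s, s ⊆ x.filter (fun j => w j = a i) ∧ s.card = t i := by
    intro i
    obtain ⟨s, hs1, hs2⟩ := Finset.exists_subset_card_eq (ht i)
    exact ⟨s, hs1, hs2⟩
  choose f hf1 hf2 using hch
  refine ⟨Finset.univ.biUnion f, ?_, ?_⟩
  · intro j hj
    obtain ⟨i, _, hji⟩ := Finset.mem_biUnion.mp hj
    exact (Finset.mem_filter.mp (hf1 i hji)).1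
  · intro i
    have hfi : (Finset.univ.biUnion f).filter (fun j => w j = a i) = f i := by
      ext j
      simp only [Finset.mem_filter, Finset.mem_biUnion, Finset.mem_univ, true_and]
      constructor
      · rintro ⟨⟨i', hji'⟩, hwj⟩
        have h1 : w j = a i' := (Finset.mem_filter.mp (hf1 i' hji')).2
        have h2 : i' = i := ha_inj (by rw [← h1, hwj])
        rwa [← h2]
      · intro hj
        exact ⟨⟨i, hj⟩, (Finset.mem_filter.mp (hf1 i hj)).2⟩
    rw [lamCoord, hfi, hf2]


/-- Let `a` be primitive, `S` an independence system,
`w ∈ {a₁,…,a_p}^n`, `λ_i := max(a)` for all `i`, and `μ ≤ λ` with `S^λ_μ ≠ ∅`.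
If `x_μ` maximizes `w·x` over `S^λ_μ` and `T := {x : x ≤ x_μ}`, then
`|w·S^λ_μ \ w·T| ≤ |G(a^λ_μ)| ≤ F(a^λ_μ)`. -/
theorem block_image_approx {n p : ℕ} (a : Fin p → ℕ)
    (ha_pos : ∀ i, 0 < a i) (ha_inj : Function.Injective a)
    (ha_gcd : Finset.univ.gcd a = 1)
    (S : Set (Finset (Fin n))) (hS_ne : S.Nonempty)
    (hS_indep : ∀ x y : Finset (Fin n), x ⊆ y → y ∈ S → x ∈ S)
    (w : Fin n → ℕ) (hw : ∀ j, ∃ i, w j = a i)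
    (lam : Fin p → ℕ) (hlam : lam = fun _ => Finset.univ.sup a)
    (μ : Fin p → ℕ) (hμ : μ ≤ lam)
    (xμ : Finset (Fin n)) (hxμ : xμ ∈ block a w S lam μ)
    (hxμ_max : ∀ x ∈ block a w S lam μ, ∑ j ∈ x, w j ≤ ∑ j ∈ xμ, w j) :
    (((fun x : Finset (Fin n) => ∑ j ∈ x, w j) '' block a w S lam μ) \
        ((fun x : Finset (Fin n) => ∑ j ∈ x, w j) '' {x | x ⊆ xμ})).ncard ≤
      (gapSet (subTuple a lam μ)).ncard ∧
    (gapSet (subTuple a lam μ)).ncard ≤ frob (subTuple a lam μ) := by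
  classical
  refine ⟨?_, gap_ncard_le_frob _⟩
  set m := Finset.univ.sup a with hm
  set b := subTuple a lam μ with hb
  set d := (Finset.univ.filter (fun i : Fin p => μ i = lam i)).gcd a with hd
  set W := ∑ j ∈ xμ, w j with hW
  set W0 := ∑ i ∈ Finset.univ.filter (fun i : Fin p => ¬ μ i = lam i), a i * μ i with hW0
  set LS : Finset (Fin n) → ℕ :=
    fun x => ∑ i : {i : Fin p // μ i = lam i}, lamCoord a w x i.1 * b i with hLS
  have hlamm : ∀ i, lam i = m := by intro i; rw [hlam]
  have hlow : ∀ x ∈ block a w S lam μ, ∀ i, μ i = lam i → m ≤ lamCoord a w x i := by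
    intro x hx i hi
    have h1 : μ i ≤ lamCoord a w x i := (hx.2 i).2 hi
    have h2 : μ i = m := hi.trans (hlamm i)
    omega
  have heqc : ∀ x ∈ block a w S lam μ, ∀ i, ¬ μ i = lam i → lamCoord a w x i = μ i := by
    intro x hx i hi
    exact (hx.2 i).1 (lt_of_le_of_ne (hμ i) hi)
  have hbi : ∀ i : {i : Fin p // μ i = lam i}, a i.1 = d * b i := by
    intro i
    have hdvd : d ∣ a i.1 := by
      rw [hd]
      exact Finset.gcd_dvd (Finset.mem_filter.mpr ⟨Finset.mem_univ _, i.2⟩)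
    rw [hb]
    show a i.1 = d * (a i.1 / (Finset.univ.filter (fun i : Fin p => μ i = lam i)).gcd a)
    rw [← hd, Nat.mul_div_cancel' hdvd]
  have hsplit : ∀ x ∈ block a w S lam μ, ∑ j ∈ x, w j = W0 + d * LS x := by
    intro x hx
    rw [sum_fiber a ha_inj w hw x]
    rw [← Finset.sum_filter_add_sum_filter_not Finset.univ (fun i : Fin p => μ i = lam i)
      (fun i => a i * lamCoord a w x i)]
    have h1 : ∑ i ∈ Finset.univ.filter (fun i : Fin p => ¬ μ i = lam i),
        a i * lamCoord a w x i = W0 := by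
      rw [hW0]
      refine Finset.sum_congr rfl fun i hi => ?_
      rw [heqc x hx i (Finset.mem_filter.mp hi).2]
    have h2 : ∑ i ∈ Finset.univ.filter (fun i : Fin p => μ i = lam i),
        a i * lamCoord a w x i = d * LS x := by
      rw [hLS, Finset.mul_sum]
      rw [Finset.sum_subtype (Finset.univ.filter (fun i : Fin p => μ i = lam i))
        ((fun i => by simp) : ∀ i : Fin p,
          i ∈ Finset.univ.filter (fun i : Fin p => μ i = lam i) ↔ μ i = lam i)
        (fun i => a i * lamCoord a w x i)]
      refine Finset.sum_congr rfl fun i _ => ?_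
      rw [hbi i]
      ring
    rw [h1, h2]
    exact Nat.add_comm _ _
  by_cases hIe : ∀ i : Fin p, ¬ μ i = lam i
  · have hempty : IsEmpty {i : Fin p // μ i = lam i} := ⟨fun i => hIe i.1 i.2⟩
    have hLS0 : ∀ x, LS x = 0 := by
      intro x
      rw [hLS]
      show ∑ i : {i : Fin p // μ i = lam i}, lamCoord a w x i.1 * b i = 0
      rw [@Finset.univ_eq_empty _ _ hempty, Finset.sum_empty]
    have hdiff : ((fun x : Finset (Fin n) => ∑ j ∈ x, w j) '' block a w S lam μ) \
        ((fun x : Finset (Fin n) => ∑ j ∈ x, w j) '' {x | x ⊆ xμ}) = ∅ := by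
      rw [Set.eq_empty_iff_forall_notMem]
      rintro v ⟨⟨x, hxB, hxv⟩, hvT⟩
      refine hvT ⟨xμ, Finset.Subset.refl xμ, ?_⟩
      show ∑ j ∈ xμ, w j = v
      rw [← hxv]
      show ∑ j ∈ xμ, w j = ∑ j ∈ x, w j
      rw [hsplit x hxB, hsplit xμ hxμ, hLS0, hLS0]
    rw [hdiff, Set.ncard_empty]
    exact Nat.zero_le _
  · push_neg at hIe
    obtain ⟨i0, hi0⟩ := hIe
    have hd_pos : 0 < d := by
      rcases Nat.eq_zero_or_pos d with h0 | h
      · exfalso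
        have hz : (Finset.univ.filter (fun i : Fin p => μ i = lam i)).gcd a = 0 := by
          rw [← hd]; exact h0
        have h1 : a i0 = 0 := Finset.gcd_eq_zero_iff.mp hz i0
          (Finset.mem_filter.mpr ⟨Finset.mem_univ _, hi0⟩)
        have := ha_pos i0
        omega
      · exact h
    have hb_pos : ∀ i : {i : Fin p // μ i = lam i}, 0 < b i := by
      intro i
      rcases Nat.eq_zero_or_pos (b i) with h0 | h
      · exfalso
        have h1 := hbi i
        rw [h0, Nat.mul_zero] at h1
        have := ha_pos i.1
        omega
      · exact h
    have hbid : ∀ i : {i : Fin p // μ i = lam i}, b i = a i.1 / d := by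
      intro i
      rw [hb, hd]
      rfl
    have hb_le : ∀ i : {i : Fin p // μ i = lam i}, b i ≤ m := by
      intro i
      rw [hbid i]
      refine le_trans (Nat.div_le_self _ _) ?_
      rw [hm]
      exact Finset.le_sup (Finset.mem_univ _)
    have hum : ∀ i : {i : Fin p // μ i = lam i}, m ≤ lamCoord a w xμ i.1 :=
      fun i => hlow xμ hxμ i.1 i.2
    have hgcd_b : Finset.univ.gcd b = 1 := by
      have hkey : d * Finset.univ.gcd b = d := by
        have h1 : d * Finset.univ.gcd b
            = Finset.univ.gcd (fun i : {i : Fin p // μ i = lam i} => d * b i) := by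
          rw [Finset.gcd_mul_left]
          simp
        have h2 : Finset.univ.gcd (fun i : {i : Fin p // μ i = lam i} => d * b i)
            = Finset.univ.gcd (fun i : {i : Fin p // μ i = lam i} => a i.1) := by
          refine Finset.gcd_congr rfl fun i _ => ?_
          rw [hbi i]
        rw [h1, h2, hd]
        apply Nat.dvd_antisymm
        · refine Finset.dvd_gcd fun j hj => ?_
          exact Finset.gcd_dvd
            (Finset.mem_univ (⟨j, (Finset.mem_filter.mp hj).2⟩ : {i : Fin p // μ i = lam i}))
        · refine Finset.dvd_gcd fun i _ => ?_
          exact Finset.gcd_dvd (Finset.mem_filter.mpr ⟨Finset.mem_univ _, i.2⟩)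
      exact Nat.eq_of_mul_eq_mul_left hd_pos (by rw [hkey, Nat.mul_one])
    have hWeq : W = W0 + d * LS xμ := hsplit xμ hxμ
    have hfin : (gapSet b).Finite := by
      obtain ⟨N, hN⟩ := gap_bdd b hgcd_b
      refine Set.Finite.subset (Set.finite_Iio N) ?_
      intro g hg
      by_contra hc
      exact hg (hN g (by simpa [Set.mem_Iio] using hc))
    have hmain : ∀ v, v ∈ (((fun x : Finset (Fin n) => ∑ j ∈ x, w j) '' block a w S lam μ) \
        ((fun x : Finset (Fin n) => ∑ j ∈ x, w j) '' {x | x ⊆ xμ})) →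
        v ≤ W ∧ d ∣ (W - v) ∧ (W - v) / d ∈ gapSet b := by
      rintro v ⟨⟨x, hxB, hxv⟩, hvT⟩
      have hvW : v ≤ W := by rw [← hxv, hW]; exact hxμ_max x hxB
      have hxv' : v = W0 + d * LS x := by rw [← hxv]; exact hsplit x hxB
      have hdle : d * LS x ≤ d * LS xμ := by omega
      have hLSle : LS x ≤ LS xμ := Nat.le_of_mul_le_mul_left hdle hd_pos
      have hWv : W - v = d * (LS xμ - LS x) := by
        have e3 : d * (LS xμ - LS x) + d * LS x = d * LS xμ := by
          rw [← Nat.mul_add, Nat.sub_add_cancel hLSle]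
        omega
      refine ⟨hvW, ⟨LS xμ - LS x, hWv⟩, ?_⟩
      have hhval : (W - v) / d = LS xμ - LS x := by
        rw [hWv]
        exact Nat.mul_div_cancel_left _ hd_pos
      rw [hhval]
      intro hmem
      obtain ⟨ν, hν⟩ := hmem
      have hbound : LS xμ - LS x ≤ ∑ i : {i : Fin p // μ i = lam i},
          (lamCoord a w xμ i.1 - m) * b i := by
        have hx_low : ∀ i : {i : Fin p // μ i = lam i}, m ≤ lamCoord a w x i.1 :=
          fun i => hlow x hxB i.1 i.2
        have hsum_m : ∑ i : {i : Fin p // μ i = lam i}, m * b i ≤ LS x := by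
          rw [hLS]
          exact Finset.sum_le_sum fun i _ => Nat.mul_le_mul_right _ (hx_low i)
        have hsplit2 : (∑ i : {i : Fin p // μ i = lam i}, (lamCoord a w xμ i.1 - m) * b i)
            + ∑ i : {i : Fin p // μ i = lam i}, m * b i = LS xμ := by
          rw [← Finset.sum_add_distrib, hLS]
          refine Finset.sum_congr rfl fun i _ => ?_
          rw [← Nat.add_mul, Nat.sub_add_cancel (hum i)]
        omega
      obtain ⟨ν', hν'sum, hν'le⟩ := exchange b (fun i => lamCoord a w xμ i.1) m hb_pos hb_le hum
        (LS xμ - LS x) hbound (∑ i, (ν i - lamCoord a w xμ i.1)) ν le_rfl hν.symm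
      set t : Fin p → ℕ := fun i =>
        if hi : μ i = lam i then lamCoord a w xμ i - ν' ⟨i, hi⟩ else μ i with ht_def
      have ht_pos : ∀ i (hi : μ i = lam i), t i = lamCoord a w xμ i - ν' ⟨i, hi⟩ := by
        intro i hi
        simp only [ht_def]
        rw [dif_pos hi]
      have ht_neg : ∀ i, ¬ μ i = lam i → t i = μ i := by
        intro i hi
        simp only [ht_def]
        rw [dif_neg hi]
      have ht : ∀ i, t i ≤ lamCoord a w xμ i := by
        intro i
        by_cases hi : μ i = lam i
        · rw [ht_pos i hi]
          exact Nat.sub_le _ _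
        · rw [ht_neg i hi]
          exact le_of_eq (heqc xμ hxμ i hi).symm
      obtain ⟨y, hysub, hyl⟩ := exists_subset_lam a ha_inj w xμ t ht
      have hyval : ∑ j ∈ y, w j = v := by
        rw [sum_fiber a ha_inj w hw y]
        have h0 : ∑ i, a i * lamCoord a w y i = ∑ i, a i * t i :=
          Finset.sum_congr rfl fun i _ => by rw [hyl i]
        rw [h0]
        rw [← Finset.sum_filter_add_sum_filter_not Finset.univ (fun i : Fin p => μ i = lam i)
          (fun i => a i * t i)]
        have h1 : ∑ i ∈ Finset.univ.filter (fun i : Fin p => ¬ μ i = lam i), a i * t i = W0 := by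
          rw [hW0]
          refine Finset.sum_congr rfl fun i hi => ?_
          rw [ht_neg i (Finset.mem_filter.mp hi).2]
        have h2 : ∑ i ∈ Finset.univ.filter (fun i : Fin p => μ i = lam i), a i * t i
            = d * LS x := by
          rw [Finset.sum_subtype (Finset.univ.filter (fun i : Fin p => μ i = lam i))
            ((fun i => by simp) : ∀ i : Fin p,
              i ∈ Finset.univ.filter (fun i : Fin p => μ i = lam i) ↔ μ i = lam i)
            (fun i => a i * t i)]
          have h3 : ∑ i : {i : Fin p // μ i = lam i}, a i.1 * t i.1
              = d * ∑ i : {i : Fin p // μ i = lam i}, (lamCoord a w xμ i.1 - ν' i) * b i := by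
            rw [Finset.mul_sum]
            refine Finset.sum_congr rfl fun i _ => ?_
            rw [ht_pos i.1 i.2, hbi i]
            ring
          rw [h3]
          have h4 : (∑ i : {i : Fin p // μ i = lam i}, (lamCoord a w xμ i.1 - ν' i) * b i)
              + ∑ i : {i : Fin p // μ i = lam i}, ν' i * b i
              = ∑ i : {i : Fin p // μ i = lam i}, lamCoord a w xμ i.1 * b i := by
            rw [← Finset.sum_add_distrib]
            refine Finset.sum_congr rfl fun i _ => ?_
            rw [← Nat.add_mul, Nat.sub_add_cancel (hν'le i)]
          have h5 : (∑ i : {i : Fin p // μ i = lam i}, lamCoord a w xμ i.1 * b i) = LS xμ := by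
            rw [hLS]
          have h6 : ∑ i : {i : Fin p // μ i = lam i}, (lamCoord a w xμ i.1 - ν' i) * b i
              = LS x := by
            omega
          rw [h6]
        rw [h1, h2, hxv']
        exact Nat.add_comm _ _
      exact hvT ⟨y, hysub, hyval⟩
    refine Set.ncard_le_ncard_of_injOn (fun v => (W - v) / d)
      (fun v hv => (hmain v hv).2.2) ?_ hfin
    intro v1 h1 v2 h2 he
    obtain ⟨hle1, hdvd1, -⟩ := hmain v1 h1
    obtain ⟨hle2, hdvd2, -⟩ := hmain v2 h2
    simp only [] at he
    have e1 : d * ((W - v1) / d) = W - v1 := Nat.mul_div_cancel' hdvd1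
    have e2 : d * ((W - v2) / d) = W - v2 := Nat.mul_div_cancel' hdvd2
    rw [he] at e1
    omega
end

section
/- Let m ≥ 2, n = 4m, I = {1,…,2m}, J = {2m+1,…,4m}. For i ∈ {0,1,2} let T_i := {1_A + 1_B : A ⊆ I, |A| = m+i, B ⊆ J, |B| = m−i} ⊆ {0,1}^n, and let S := {z ∈ {0,1}^n : z ≤ x for some x ∈ T_0 ∪ T_2}. Then for every positive integer p < C(2m, m+1) and all vectors c^1,…,c^p ∈ ℤ^n, there exists y ∈ T_1 such that c^i·y ≤ max{c^i·x : x ∈ S} for every i = 1,…,p. -/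
/-- 0/1 points `x ∈ {0,1}^n` with `n = 4m` are encoded as subsets of the ground
set `Fin (4m)` (their supports); `1_A + 1_B` with `A, B` disjoint is `A ∪ B`,
`z ≤ x` is `z ⊆ x`, and `c·x = ∑_{j ∈ x} c_j`. Here
`I = {1,…,2m}` is encoded as `{j : (j : ℕ) < 2m}` and `J = {2m+1,…,4m}` as
`{j : 2m ≤ (j : ℕ)}`. `T_i := {1_A + 1_B : A ⊆ I, |A| = m+i, B ⊆ J, |B| = m−i}`. -/
def Tset (m i : ℕ) : Set (Finset (Fin (4 * m))) :=
  {x | ∃ A B : Finset (Fin (4 * m)),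
    A ⊆ Finset.univ.filter (fun j => (j : ℕ) < 2 * m) ∧
    B ⊆ Finset.univ.filter (fun j => 2 * m ≤ (j : ℕ)) ∧
    A.card = m + i ∧ B.card = m - i ∧ x = A ∪ B}

/-- The independence system generated by `T₀ ∪ T₂`. -/
def Sys (m : ℕ) : Set (Finset (Fin (4 * m))) :=
  {z | ∃ x ∈ Tset m 0 ∪ Tset m 2, z ⊆ x}

/-- Key exchange lemma: if `(A,B)` and `(A',B')` are both "bad" pairs for the
same cost vector `c`, and `A' ⊄ A`, then `B ⊆ B'`. -/
lemma bad_key {n : ℕ} (c : Fin n → ℤ) (I2 J2 : Finset (Fin n))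
    (A B A' B' : Finset (Fin n)) (hA : A ⊆ I2) (hA' : A' ⊆ I2) (hB : B ⊆ J2)
    (h1 : ∀ b ∈ B, ∀ a ∈ I2 \ A, c a < c b)
    (h1' : ∀ a ∈ A', ∀ b ∈ J2 \ B', c b < c a)
    (hAA : ¬ A' ⊆ A) : B ⊆ B' := by
  classical
  obtain ⟨a', ha'A', ha'A⟩ : ∃ a' ∈ A', a' ∉ A := by
    by_contra h; push_neg at h; exact hAA h
  intro b hb
  by_contra hbB'
  have h2 : c b < c a' := h1' a' ha'A' b (Finset.mem_sdiff.2 ⟨hB hb, hbB'⟩)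
  have h3 : c a' < c b := h1 b hb a' (Finset.mem_sdiff.2 ⟨hA' ha'A', ha'A⟩)
  exact absurd h2 (not_lt.2 h3.le)

/-- For every `m ≥ 2` and every `p` with `0 < p < C(2m, m+1)`
and all vectors `c¹,…,c^p ∈ ℤ^n`, there is `y ∈ T₁` such that
`cⁱ·y ≤ max{cⁱ·x : x ∈ S}` for every `i = 1,…,p`. -/
theorem oracle_lower_bound (m : ℕ) (hm : 2 ≤ m) (p : ℕ) (hp0 : 0 < p)
    (hp : p < Nat.choose (2 * m) (m + 1)) (c : Fin p → Fin (4 * m) → ℤ) :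
    ∃ y ∈ Tset m 1, ∀ i : Fin p, ∃ x ∈ Sys m, ∑ j ∈ y, c i j ≤ ∑ j ∈ x, c i j := by
  classical
  set I2 : Finset (Fin (4 * m)) := Finset.univ.filter (fun j => (j : ℕ) < 2 * m) with hI2
  set J2 : Finset (Fin (4 * m)) := Finset.univ.filter (fun j => 2 * m ≤ (j : ℕ)) with hJ2
  have hdisj : Disjoint I2 J2 := by
    rw [Finset.disjoint_left]
    intro x hx hx'
    simp only [hI2, hJ2, Finset.mem_filter] at hx hx'
    omega
  have hdisj' : ∀ A' B' : Finset (Fin (4 * m)), A' ⊆ I2 → B' ⊆ J2 → Disjoint A' B' :=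
    fun _ _ h1 h2 => hdisj.mono h1 h2
  have hIcard : I2.card = 2 * m := by
    have hmap : I2 = Finset.map
        ⟨fun i : Fin (2 * m) => (⟨i.1, by have := i.2; omega⟩ : Fin (4 * m)),
          by intro a b hab; simpa [Fin.ext_iff] using hab⟩ Finset.univ := by
      ext j
      simp only [hI2, Finset.mem_filter, Finset.mem_univ, true_and, Finset.mem_map,
        Function.Embedding.coeFn_mk]
      constructor
      · intro h; exact ⟨⟨j.1, h⟩, rfl⟩
      · rintro ⟨i, rfl⟩; exact i.2
    rw [hmap, Finset.card_map, Finset.card_univ, Fintype.card_fin]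
  have hJcard : J2.card = 2 * m := by
    have hmap : J2 = Finset.map
        ⟨fun i : Fin (2 * m) => (⟨2 * m + i.1, by have := i.2; omega⟩ : Fin (4 * m)),
by intro a b hab; simp [Fin.ext_iff] at hab ⊢; omega⟩ Finset.univ := by
      ext j
      simp only [hJ2, Finset.mem_filter, Finset.mem_univ, true_and, Finset.mem_map,
        Function.Embedding.coeFn_mk]
      constructor
      · intro h
        refine ⟨⟨j.1 - 2 * m, by have := j.2; omega⟩, Fin.ext ?_⟩
        show 2 * m + (j.1 - 2 * m) = j.1
        omega
      · rintro ⟨i, rfl⟩; show 2 * m ≤ 2 * m + i.1; omega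
    rw [hmap, Finset.card_map, Finset.card_univ, Fintype.card_fin]
  -- the "bad pair" predicate for a cost vector c
  have hchoice : ∀ i : Fin p, ∃ AB : Finset (Fin (4 * m)) × Finset (Fin (4 * m)),
      ∀ A B : Finset (Fin (4 * m)),
        (A ⊆ I2 ∧ B ⊆ J2 ∧ A.card = m + 1 ∧ B.card = m - 1 ∧
          (∀ a ∈ A, ∀ b ∈ J2 \ B, c i b < c i a) ∧
          (∀ b ∈ B, ∀ a ∈ I2 \ A, c i a < c i b)) → A = AB.1 ∨ B = AB.2 := by
    intro i
    by_cases hex : ∃ A₀ B₀ : Finset (Fin (4 * m)),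
        (A₀ ⊆ I2 ∧ B₀ ⊆ J2 ∧ A₀.card = m + 1 ∧ B₀.card = m - 1 ∧
          (∀ a ∈ A₀, ∀ b ∈ J2 \ B₀, c i b < c i a) ∧
          (∀ b ∈ B₀, ∀ a ∈ I2 \ A₀, c i a < c i b))
    · obtain ⟨A₀, B₀, hA₀, hB₀, hcA₀, hcB₀, h1₀, h2₀⟩ := hex
      refine ⟨(A₀, B₀), ?_⟩
      rintro A B ⟨hA, hB, hcA, hcB, h1, h2⟩
      by_cases hAA : A = A₀
      · exact Or.inl hAA
      · right
        have hns : ¬ A₀ ⊆ A := by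
          intro hsub
          exact hAA (Finset.eq_of_subset_of_card_le hsub (by omega)).symm
        have hsub : B ⊆ B₀ := bad_key (c i) I2 J2 A B A₀ B₀ hA hA₀ hB h2 h1₀ hns
        exact Finset.eq_of_subset_of_card_le hsub (by show B₀.card ≤ B.card; omega)
    · exact ⟨(∅, ∅), fun A B hAB => absurd ⟨A, B, hAB⟩ hex⟩
  choose F hF using hchoice
  -- pick A avoiding all the (F i).1 and B avoiding all the (F i).2
  have hAex : ∃ A ∈ Finset.powersetCard (m + 1) I2,
      A ∉ Finset.image (fun i => (F i).1) Finset.univ := by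
    by_contra h
    push_neg at h
    have hsub : Finset.powersetCard (m + 1) I2 ⊆
        Finset.image (fun i => (F i).1) Finset.univ := h
    have := Finset.card_le_card hsub
    rw [Finset.card_powersetCard, hIcard] at this
    have h2 := Finset.card_image_le (s := (Finset.univ : Finset (Fin p)))
      (f := fun i => (F i).1)
    simp only [Finset.card_univ, Fintype.card_fin] at h2
    omega
  have hBex : ∃ B ∈ Finset.powersetCard (m - 1) J2,
      B ∉ Finset.image (fun i => (F i).2) Finset.univ := by
    by_contra h
    push_neg at h
    have hsub : Finset.powersetCard (m - 1) J2 ⊆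
        Finset.image (fun i => (F i).2) Finset.univ := h
    have hle := Finset.card_le_card hsub
    rw [Finset.card_powersetCard, hJcard] at hle
    have h2 := Finset.card_image_le (s := (Finset.univ : Finset (Fin p)))
      (f := fun i => (F i).2)
    simp only [Finset.card_univ, Fintype.card_fin] at h2
    have hsymm : Nat.choose (2 * m) (m - 1) = Nat.choose (2 * m) (m + 1) := by
      have h1 : m + 1 ≤ 2 * m := by omega
      have := Nat.choose_symm h1
      have heq : 2 * m - (m + 1) = m - 1 := by omega
      rw [heq] at this
      exact this.symm ▸ this
    omega
  obtain ⟨A, hAmem, hAnot⟩ := hAex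
  obtain ⟨B, hBmem, hBnot⟩ := hBex
  rw [Finset.mem_powersetCard] at hAmem hBmem
  obtain ⟨hA, hcA⟩ := hAmem
  obtain ⟨hB, hcB⟩ := hBmem
  refine ⟨A ∪ B, ⟨A, B, hA, hB, by omega, by omega, rfl⟩, ?_⟩
  intro i
  -- (A, B) is not a bad pair for c i
  have hnotbad : ¬ ((∀ a ∈ A, ∀ b ∈ J2 \ B, c i b < c i a) ∧
      (∀ b ∈ B, ∀ a ∈ I2 \ A, c i a < c i b)) := by
    intro hbad
    rcases hF i A B ⟨hA, hB, hcA, hcB, hbad.1, hbad.2⟩ with h | h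
    · exact hAnot (Finset.mem_image.2 ⟨i, Finset.mem_univ i, h.symm⟩)
    · exact hBnot (Finset.mem_image.2 ⟨i, Finset.mem_univ i, h.symm⟩)
  rw [not_and_or] at hnotbad
  have hsumAB : ∑ j ∈ A ∪ B, c i j = ∑ j ∈ A, c i j + ∑ j ∈ B, c i j :=
    Finset.sum_union (hdisj' A B hA hB)
  rcases hnotbad with h | h
  · -- an exchange into T₀
    push_neg at h
    obtain ⟨a, haA, b, hbJB, hab⟩ := h
    rw [Finset.mem_sdiff] at hbJB
    obtain ⟨hbJ, hbB⟩ := hbJB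
    refine ⟨(A.erase a) ∪ (insert b B), ⟨(A.erase a) ∪ (insert b B),
        Or.inl ⟨A.erase a, insert b B, (Finset.erase_subset a A).trans hA,
          Finset.insert_subset hbJ hB, ?_, ?_, rfl⟩, Finset.Subset.refl _⟩, ?_⟩
    · rw [Finset.card_erase_of_mem haA]; omega
    · rw [Finset.card_insert_of_notMem hbB]; omega
    · have hsum2 : ∑ j ∈ (A.erase a) ∪ (insert b B), c i j =
          ∑ j ∈ A.erase a, c i j + ∑ j ∈ insert b B, c i j :=
        Finset.sum_union (hdisj' _ _ ((Finset.erase_subset a A).trans hA)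
          (Finset.insert_subset hbJ hB))
      have he : ∑ j ∈ A.erase a, c i j + c i a = ∑ j ∈ A, c i j :=
        Finset.sum_erase_add A (c i) haA
      have hins : ∑ j ∈ insert b B, c i j = c i b + ∑ j ∈ B, c i j :=
        Finset.sum_insert hbB
      rw [hsumAB, hsum2, hins]
      linarith
  · -- an exchange into T₂
    push_neg at h
    obtain ⟨b, hbB, a, haIA, hba⟩ := h
    rw [Finset.mem_sdiff] at haIA
    obtain ⟨haI, haA⟩ := haIA
    refine ⟨(insert a A) ∪ (B.erase b), ⟨(insert a A) ∪ (B.erase b),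
        Or.inr ⟨insert a A, B.erase b, Finset.insert_subset haI hA,
          (Finset.erase_subset b B).trans hB, ?_, ?_, rfl⟩, Finset.Subset.refl _⟩, ?_⟩
    · rw [Finset.card_insert_of_notMem haA]; omega
    · rw [Finset.card_erase_of_mem hbB]; omega
    · have hsum2 : ∑ j ∈ (insert a A) ∪ (B.erase b), c i j =
          ∑ j ∈ insert a A, c i j + ∑ j ∈ B.erase b, c i j :=
        Finset.sum_union (hdisj' _ _ (Finset.insert_subset haI hA)
          ((Finset.erase_subset b B).trans hB))
      have he : ∑ j ∈ B.erase b, c i j + c i b = ∑ j ∈ B, c i j :=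
        Finset.sum_erase_add B (c i) hbB
      have hins : ∑ j ∈ insert a A, c i j = c i a + ∑ j ∈ A, c i j :=
        Finset.sum_insert haA
      rw [hsumAB, hsum2, hins]
      linarith
end

section
/- Let m ≥ 2, n = 4m, I = {1,…,2m}, J = {2m+1,…,4m}. For i ∈ {0,1,2} let T_i := {1_A + 1_B : A ⊆ I, |A| = m+i, B ⊆ J, |B| = m−i} ⊆ {0,1}^n, and let S := {z ∈ {0,1}^n : z ≤ x for some x ∈ T_0 ∪ T_2}. For c ∈ ℤ^n define Y(c) := {y ∈ T_1 : c·y > max{c·x : x ∈ S}}. Then |Y(c)| ≤ C(2m, m−1) for every c ∈ ℤ^n. -/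
/-- `Y(c) := {y ∈ T₁ : c·y > max{c·x : x ∈ S}}`. -/
def Yset (m : ℕ) (c : Fin (4 * m) → ℤ) : Set (Finset (Fin (4 * m))) :=
  {y ∈ Tset m 1 | ∀ x ∈ Sys m, ∑ j ∈ x, c j < ∑ j ∈ y, c j}

/-- The "left half" of the ground set. -/
private def IF (m : ℕ) : Finset (Fin (4 * m)) :=
  Finset.univ.filter (fun j => (j : ℕ) < 2 * m)

/-- The "right half" of the ground set. -/
private def JF (m : ℕ) : Finset (Fin (4 * m)) :=
  Finset.univ.filter (fun j => 2 * m ≤ (j : ℕ))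

private lemma IF_disj_JF (m : ℕ) : Disjoint (IF m) (JF m) := by
  rw [Finset.disjoint_left]
  intro a ha ha'
  simp only [IF, JF, Finset.mem_filter, Finset.mem_univ, true_and] at ha ha'
  omega

private lemma IF_card (m : ℕ) (hm : 1 ≤ m) : (IF m).card = 2 * m := by
  have h : 2 * m < 4 * m := by omega
  have : IF m = Finset.Iio (⟨2 * m, h⟩ : Fin (4 * m)) := by
    ext x; simp [IF, Finset.mem_Iio, Fin.lt_def]
  rw [this, Fin.card_Iio]

private lemma JF_card (m : ℕ) (hm : 1 ≤ m) : (JF m).card = 2 * m := by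
  have h : 2 * m < 4 * m := by omega
  have : JF m = Finset.Ici (⟨2 * m, h⟩ : Fin (4 * m)) := by
    ext x; simp [JF, Finset.mem_Ici, Fin.le_def]
  rw [this, Fin.card_Ici]
  simp only [Fin.val_mk]
  omega

/-- Membership in `Tset` rephrased with `IF`/`JF`. -/
private lemma mem_Tset_iff (m i : ℕ) (x : Finset (Fin (4 * m))) :
    x ∈ Tset m i ↔ ∃ A B : Finset (Fin (4 * m)),
      A ⊆ IF m ∧ B ⊆ JF m ∧ A.card = m + i ∧ B.card = m - i ∧ x = A ∪ B := Iff.rfl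

private lemma inter_IF (m : ℕ) {A B : Finset (Fin (4 * m))}
    (hA : A ⊆ IF m) (hB : B ⊆ JF m) : (A ∪ B) ∩ IF m = A := by
  ext x
  simp only [Finset.mem_inter, Finset.mem_union]
  constructor
  · rintro ⟨hx | hx, hxI⟩
    · exact hx
    · exact absurd hxI (Finset.disjoint_right.mp (IF_disj_JF m) (hB hx))
  · intro hx; exact ⟨Or.inl hx, hA hx⟩

private lemma inter_JF (m : ℕ) {A B : Finset (Fin (4 * m))}
    (hA : A ⊆ IF m) (hB : B ⊆ JF m) : (A ∪ B) ∩ JF m = B := by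
  ext x
  simp only [Finset.mem_inter, Finset.mem_union]
  constructor
  · rintro ⟨hx | hx, hxJ⟩
    · exact absurd hxJ (Finset.disjoint_left.mp (IF_disj_JF m) (hA hx))
    · exact hx
  · intro hx; exact ⟨Or.inr hx, hB hx⟩

private lemma sum_split (m : ℕ) (c : Fin (4 * m) → ℤ) {A B : Finset (Fin (4 * m))}
    (hA : A ⊆ IF m) (hB : B ⊆ JF m) :
    ∑ j ∈ A ∪ B, c j = (∑ j ∈ A, c j) + ∑ j ∈ B, c j :=
  Finset.sum_union (Finset.disjoint_of_subset_left hA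
    (Finset.disjoint_of_subset_right hB (IF_disj_JF m)))

/-- Key lemma: two members of `Y(c)` cannot differ in both halves. -/
private lemma key (m : ℕ) (hm : 2 ≤ m) (c : Fin (4 * m) → ℤ)
    {A B A' B' : Finset (Fin (4 * m))}
    (hA : A ⊆ IF m) (hB : B ⊆ JF m) (hA' : A' ⊆ IF m) (hB' : B' ⊆ JF m)
    (hAc : A.card = m + 1) (hBc : B.card = m - 1)
    (hA'c : A'.card = m + 1) (hB'c : B'.card = m - 1)
    (hy : ∀ x ∈ Sys m, ∑ j ∈ x, c j < ∑ j ∈ A ∪ B, c j)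
    (hy' : ∀ x ∈ Sys m, ∑ j ∈ x, c j < ∑ j ∈ A' ∪ B', c j)
    {a b : Fin (4 * m)} (ha : a ∈ A' \ A) (hb : b ∈ B \ B') : False := by
  classical
  rw [Finset.mem_sdiff] at ha hb
  obtain ⟨haA', haA⟩ := ha
  obtain ⟨hbB, hbB'⟩ := hb
  -- first constructed point : (A ∪ {a}) ∪ (B \ {b}) ∈ T₂
  have hz1 : (insert a A ∪ B.erase b) ∈ Sys m := by
    refine ⟨insert a A ∪ B.erase b, Or.inr ?_, subset_rfl⟩
    refine ⟨insert a A, B.erase b, ?_, ?_, ?_, ?_, rfl⟩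
    · intro x hx
      rcases Finset.mem_insert.mp hx with rfl | hx
      · exact hA' haA'
      · exact hA hx
    · exact (Finset.erase_subset _ _).trans hB
    · rw [Finset.card_insert_of_notMem haA, hAc]
    · rw [Finset.card_erase_of_mem hbB, hBc]; omega
  -- second constructed point : (A' \ {a}) ∪ (B' ∪ {b}) ∈ T₀
  have hz2 : (A'.erase a ∪ insert b B') ∈ Sys m := by
    refine ⟨A'.erase a ∪ insert b B', Or.inl ?_, subset_rfl⟩
    refine ⟨A'.erase a, insert b B', ?_, ?_, ?_, ?_, rfl⟩
    · exact (Finset.erase_subset _ _).trans hA'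
    · intro x hx
      rcases Finset.mem_insert.mp hx with rfl | hx
      · exact hB hbB
      · exact hB' hx
    · rw [Finset.card_erase_of_mem haA', hA'c]; omega
    · rw [Finset.card_insert_of_notMem hbB', hB'c]; omega
  have h1 := hy _ hz1
  have h2 := hy' _ hz2
  rw [sum_split m c hA hB] at h1
  rw [sum_split m c hA' hB'] at h2
  rw [sum_split m c (A := insert a A) (B := B.erase b)] at h1
  · rw [sum_split m c (A := A'.erase a) (B := insert b B')] at h2
    · rw [Finset.sum_insert haA, Finset.sum_erase_eq_sub hbB] at h1
      rw [Finset.sum_erase_eq_sub haA', Finset.sum_insert hbB'] at h2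
      linarith
    · exact (Finset.erase_subset _ _).trans hA'
    · intro x hx
      rcases Finset.mem_insert.mp hx with rfl | hx
      · exact hB hbB
      · exact hB' hx
  · intro x hx
    rcases Finset.mem_insert.mp hx with rfl | hx
    · exact hA' haA'
    · exact hA hx
  · exact (Finset.erase_subset _ _).trans hB

/-- Decomposition of an element of `Yset`. -/
private lemma yset_parts (m : ℕ) (c : Fin (4 * m) → ℤ) {y : Finset (Fin (4 * m))}
    (hy : y ∈ Yset m c) :
    (y ∩ IF m).card = m + 1 ∧ (y ∩ JF m).card = m - 1 ∧ y = (y ∩ IF m) ∪ (y ∩ JF m) := by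
  obtain ⟨⟨A, B, hA, hB, hAc, hBc, rfl⟩, _⟩ := hy
  rw [inter_IF m hA hB, inter_JF m hA hB]
  exact ⟨hAc, hBc, rfl⟩

/-- If two members of `Y(c)` differ in the `I`-part, they agree on the `J`-part. -/
private lemma Jpart_eq (m : ℕ) (hm : 2 ≤ m) (c : Fin (4 * m) → ℤ)
    {y y' : Finset (Fin (4 * m))} (hy : y ∈ Yset m c) (hy' : y' ∈ Yset m c)
    (hne : y ∩ IF m ≠ y' ∩ IF m) : y ∩ JF m = y' ∩ JF m := by
  classical
  obtain ⟨⟨A, B, hA, hB, hAc, hBc, rfl⟩, hsy⟩ := hy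
  obtain ⟨⟨A', B', hA', hB', hA'c, hB'c, rfl⟩, hsy'⟩ := hy'
  rw [inter_IF m hA hB, inter_IF m hA' hB'] at hne
  rw [inter_JF m hA hB, inter_JF m hA' hB']
  -- A ≠ A', pick a ∈ A' \ A
  have hAA : ¬ A' ⊆ A := by
    intro hsub
    exact hne (Finset.eq_of_subset_of_card_le hsub (by omega)).symm
  obtain ⟨a, ha⟩ := Finset.not_subset.mp hAA
  have ha' : a ∈ A' \ A := Finset.mem_sdiff.mpr ha
  -- show B ⊆ B'
  have hBsub : B ⊆ B' := by
    intro b hbB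
    by_contra hbB'
    exact key m hm c hA hB hA' hB' hAc hBc hA'c hB'c hsy hsy' ha'
      (Finset.mem_sdiff.mpr ⟨hbB, hbB'⟩)
  exact Finset.eq_of_subset_of_card_le hBsub (by omega)

/-- For every `m ≥ 2` and every `c ∈ ℤ^n`,
`|Y(c)| ≤ C(2m, m−1)`. -/
theorem Yset_card_le (m : ℕ) (hm : 2 ≤ m) (c : Fin (4 * m) → ℤ) :
    (Yset m c).ncard ≤ Nat.choose (2 * m) (m - 1) := by
  classical
  have hfin : (Yset m c).Finite := Set.toFinite _
  rw [Set.ncard_eq_toFinset_card _ hfin]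
  by_cases hall : ∀ y ∈ Yset m c, ∀ y' ∈ Yset m c, y ∩ IF m = y' ∩ IF m
  · -- all members share the I-part; inject via the J-part
    calc hfin.toFinset.card ≤ ((JF m).powersetCard (m - 1)).card := by
          apply Finset.card_le_card_of_injOn (fun y => y ∩ JF m)
          · intro y hy
            rw [Finset.mem_coe, Set.Finite.mem_toFinset] at hy
            obtain ⟨_, hJc, _⟩ := yset_parts m c hy
            exact Finset.mem_powersetCard.mpr ⟨Finset.inter_subset_right, hJc⟩
          · intro y hy y' hy' heq
            rw [Set.Finite.coe_toFinset] at hy hy'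
            obtain ⟨_, _, hdec⟩ := yset_parts m c hy
            obtain ⟨_, _, hdec'⟩ := yset_parts m c hy'
            rw [hdec, hdec', hall y hy y' hy', show y ∩ JF m = y' ∩ JF m from heq]
      _ = Nat.choose (2 * m) (m - 1) := by
          rw [Finset.card_powersetCard, JF_card m (by omega)]
  · -- two members differ in the I-part; then all share the J-part
    push_neg at hall
    obtain ⟨y1, hy1, y2, hy2, h12⟩ := hall
    have hJ12 : y1 ∩ JF m = y2 ∩ JF m := Jpart_eq m hm c hy1 hy2 h12
    have hJall : ∀ y ∈ Yset m c, y ∩ JF m = y1 ∩ JF m := by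
      intro y hy
      by_cases h : y ∩ IF m = y1 ∩ IF m
      · have : y ∩ IF m ≠ y2 ∩ IF m := by rw [h]; exact h12
        rw [Jpart_eq m hm c hy hy2 this, ← hJ12]
      · exact Jpart_eq m hm c hy hy1 h
    calc hfin.toFinset.card ≤ ((IF m).powersetCard (m + 1)).card := by
          apply Finset.card_le_card_of_injOn (fun y => y ∩ IF m)
          · intro y hy
            rw [Finset.mem_coe, Set.Finite.mem_toFinset] at hy
            obtain ⟨hIc, _, _⟩ := yset_parts m c hy
            exact Finset.mem_powersetCard.mpr ⟨Finset.inter_subset_right, hIc⟩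
          · intro y hy y' hy' heq
            rw [Set.Finite.coe_toFinset] at hy hy'
            obtain ⟨_, _, hdec⟩ := yset_parts m c hy
            obtain ⟨_, _, hdec'⟩ := yset_parts m c hy'
            rw [hdec, hdec', show y ∩ IF m = y' ∩ IF m from heq, hJall y hy, hJall y' hy']
      _ = Nat.choose (2 * m) (m - 1) := by
          rw [Finset.card_powersetCard, IF_card m (by omega)]
          have h1 : m + 1 ≤ 2 * m := by omega
          have h2 : 2 * m - (m + 1) = m - 1 := by omega
          rw [← Nat.choose_symm h1, h2]
end

section
/- Let a_j, a_k, a_l be positive integers with gcd(a_j, a_k, a_l) = 1. Then there exist an integer γ with 0 ≤ γ ≤ ⌈a_j/2⌉ and nonnegative integers x_j, x_l, not both zero, such that a_j·x_j = γ·a_k + a_l·x_l, x_l ≤ ⌊a_j/2⌋, and a_j·x_j ≤ max(a_j, a_k, a_l)·a_j (hence x_j ≤ max(a_j, a_k, a_l)). -/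
private lemma claim_two_sub_dvd (n a x y : ℕ) [NeZero n] (hxy : x ≤ y)
    (h : ((a * x : ℕ) : ZMod n) = ((a * y : ℕ) : ZMod n)) : n ∣ a * (y - x) := by
  have hle : a * x ≤ a * y := Nat.mul_le_mul_left a hxy
  have : ((a * (y - x) : ℕ) : ZMod n) = 0 := by
    rw [Nat.mul_sub, Nat.cast_sub hle, ← h, sub_self]
  exact (ZMod.natCast_eq_zero_iff _ _).mp this

private lemma claim_two_collide (n a x y : ℕ) [NeZero n] (hne : x ≠ y)
    (h : ((a * x : ℕ) : ZMod n) = ((a * y : ℕ) : ZMod n)) :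
    ∃ d, 0 < d ∧ d ≤ max x y ∧ n ∣ a * d := by
  rcases Nat.le_total x y with h' | h'
  · exact ⟨y - x, by omega, by omega, claim_two_sub_dvd n a x y h' h⟩
  · exact ⟨x - y, by omega, by omega, claim_two_sub_dvd n a y x h' h.symm⟩

private lemma claim_two_aux (aj ak al γ xl : ℕ) (haj : 0 < aj)
    (hdvd : aj ∣ γ * ak + al * xl) (hγ : γ ≤ (aj + 1) / 2) (hxl : xl ≤ aj / 2)
    (hnz : xl ≠ 0 ∨ 0 < γ * ak + al * xl)
    (hakM : ak ≤ max aj (max ak al)) (halM : al ≤ max aj (max ak al)) :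
    ∃ γ' xj xl' : ℕ, γ' ≤ (aj + 1) / 2 ∧ ¬(xj = 0 ∧ xl' = 0) ∧
      aj * xj = γ' * ak + al * xl' ∧ xl' ≤ aj / 2 ∧
      aj * xj ≤ max aj (max ak al) * aj ∧ xj ≤ max aj (max ak al) := by
  set M := max aj (max ak al) with hM
  have heq : aj * ((γ * ak + al * xl) / aj) = γ * ak + al * xl :=
    Nat.mul_div_cancel' hdvd
  have hbound : γ * ak + al * xl ≤ M * aj := by
    have h1 : γ * ak ≤ ((aj + 1) / 2) * M := Nat.mul_le_mul hγ hakM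
    have h2 : al * xl ≤ M * (aj / 2) := Nat.mul_le_mul halM hxl
    have h3 : (aj + 1) / 2 + aj / 2 = aj := by omega
    calc γ * ak + al * xl ≤ ((aj + 1) / 2) * M + M * (aj / 2) := by omega
      _ = M * ((aj + 1) / 2 + aj / 2) := by ring
      _ = M * aj := by rw [h3]
  refine ⟨γ, (γ * ak + al * xl) / aj, xl, hγ, ?_, heq, hxl, ?_, ?_⟩
  · rintro ⟨h1, h2⟩
    rcases hnz with h | h
    · exact h h2
    · rw [h1, Nat.mul_zero] at heq
      omega
  · rw [heq]; exact hbound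
  · have : aj * ((γ * ak + al * xl) / aj) ≤ aj * M := by
      rw [heq]; rw [mul_comm aj M]; exact hbound
    exact Nat.le_of_mul_le_mul_left this haj

/-- **Claim 2.** For positive integers `a_j, a_k, a_l` with
`gcd(a_j, a_k, a_l) = 1`, there exist `γ ≤ ⌈a_j/2⌉` (i.e. `γ ≤ (a_j+1)/2` with
`ℕ`-division) and nonnegative integers `x_j, x_l`, not both zero, with
`a_j·x_j = γ·a_k + a_l·x_l`, `x_l ≤ ⌊a_j/2⌋`, and
`a_j·x_j ≤ max(a_j,a_k,a_l)·a_j` (hence `x_j ≤ max(a_j,a_k,a_l)`). -/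
theorem claim_two (aj ak al : ℕ) (haj : 0 < aj) (hak : 0 < ak) (hal : 0 < al)
    (hgcd : Nat.gcd aj (Nat.gcd ak al) = 1) :
    ∃ γ xj xl : ℕ, γ ≤ (aj + 1) / 2 ∧ ¬(xj = 0 ∧ xl = 0) ∧
      aj * xj = γ * ak + al * xl ∧ xl ≤ aj / 2 ∧
      aj * xj ≤ max aj (max ak al) * aj ∧ xj ≤ max aj (max ak al) := by
  haveI : NeZero aj := ⟨haj.ne'⟩
  have hakM : ak ≤ max aj (max ak al) := le_trans (le_max_left _ _) (le_max_right _ _)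
  have halM : al ≤ max aj (max ak al) := le_trans (le_max_right _ _) (le_max_right _ _)
  set f : ℕ → ZMod aj := fun x => ((al * x : ℕ) : ZMod aj) with hf
  set g : ℕ → ZMod aj := fun x => -((ak * x : ℕ) : ZMod aj) with hg
  by_cases h1 : Set.InjOn f (Finset.range (aj / 2 + 1))
  · by_cases h2 : Set.InjOn g (Finset.range ((aj + 1) / 2 + 1))
    · -- both injective: pigeonhole
      set A := (Finset.range (aj / 2 + 1)).image f with hA
      set B := (Finset.range ((aj + 1) / 2 + 1)).image g with hB
      have hAcard : A.card = aj / 2 + 1 := by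
        rw [hA, Finset.card_image_of_injOn h1, Finset.card_range]
      have hBcard : B.card = (aj + 1) / 2 + 1 := by
        rw [hB, Finset.card_image_of_injOn h2, Finset.card_range]
      have hU : (A ∪ B).card ≤ aj := by
        have := Finset.card_le_univ (A ∪ B)
        simpa [ZMod.card] using this
      have hsum : (A ∪ B).card + (A ∩ B).card = A.card + B.card :=
        Finset.card_union_add_card_inter A B
      have hI : 1 < (A ∩ B).card := by omega
      obtain ⟨v, hv, hv0⟩ := Finset.exists_mem_ne hI 0
      rw [Finset.mem_inter] at hv
      obtain ⟨xl, hxlr, hxl⟩ := Finset.mem_image.mp hv.1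
      obtain ⟨γ, hγr, hγ⟩ := Finset.mem_image.mp hv.2
      have hxl0 : xl ≠ 0 := by
        rintro rfl
        apply hv0
        rw [← hxl, hf]
        simp
      have hdvd : aj ∣ γ * ak + al * xl := by
        have : ((γ * ak + al * xl : ℕ) : ZMod aj) = 0 := by
          push_cast
          have e1 : ((al * xl : ℕ) : ZMod aj) = v := hxl
          have e2 : -((ak * γ : ℕ) : ZMod aj) = v := hγ
          push_cast at e1 e2
          linear_combination e1 - e2
        exact (ZMod.natCast_eq_zero_iff _ _).mp this
      exact claim_two_aux aj ak al γ xl haj hdvd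
        (by have := Finset.mem_range.mp hγr; omega)
        (by have := Finset.mem_range.mp hxlr; omega)
        (Or.inl hxl0) hakM halM
    · -- g not injective
      rw [Set.InjOn] at h2
      push_neg at h2
      obtain ⟨x, hx, y, hy, hxy, hne⟩ := h2
      simp only [Finset.coe_range, Set.mem_Iio] at hx hy
      have hxy' : ((ak * x : ℕ) : ZMod aj) = ((ak * y : ℕ) : ZMod aj) := by
        have := hxy
        simp only [hg, neg_inj] at this
        exact this
      obtain ⟨d, hd0, hdle, hdvd⟩ := claim_two_collide aj ak x y hne hxy'
      have hdvd' : aj ∣ d * ak + al * 0 := by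
        have e : d * ak + al * 0 = ak * d := by ring
        rw [e]; exact hdvd
      exact claim_two_aux aj ak al d 0 haj hdvd' (by omega) (by omega)
        (Or.inr (by have : 0 < d * ak := Nat.mul_pos hd0 hak; omega)) hakM halM
  · -- f not injective
    rw [Set.InjOn] at h1
    push_neg at h1
    obtain ⟨x, hx, y, hy, hxy, hne⟩ := h1
    simp only [Finset.coe_range, Set.mem_Iio] at hx hy
    obtain ⟨d, hd0, hdle, hdvd⟩ := claim_two_collide aj al x y hne hxy
    have hdvd' : aj ∣ 0 * ak + al * d := by
      have e : 0 * ak + al * d = al * d := by ring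
      rw [e]; exact hdvd
    exact claim_two_aux aj ak al 0 d haj hdvd' (by omega) (by omega)
      (Or.inl (by omega)) hakM halM
end
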